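/- arXiv:2203.15756 — 6 statements merged into one kernel-verified Lean document; each statement's English description precedes it below -/
import Mathlib

section
/- Two directed acyclic graphs G_1 and G_2 on the same vertex set with the same skeleton that differ in the orientation of at least one edge produce different 'unrolled' graphs ICM(G_1) and ICM(G_2) with different v-structures: if X_i → X_j in G_1 and X_j → X_i in G_2, then the path X_{i;n} → X_{j;n} ↔ X_{j;m} (n ≠ m) is a v-structure (collider at X_{j;n}) in ICM(G_1) but the corresponding path X_{i;n} ← X_{j;n} ↔ X_{j;m} is not a v-structure in ICM(G_2). -/
/-- A mixed graph with directed and bidirected edges. -/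
structure MixedGraph (V : Type*) where
  dir : V → V → Prop
  bi : V → V → Prop

namespace MixedGraph

variable {V : Type*} (G : MixedGraph V)

/-- Two vertices are adjacent if they are joined by a directed or bidirected edge. -/
def Adj (p q : V) : Prop := G.dir p q ∨ G.dir q p ∨ G.bi p q ∨ G.bi q p

/-- There is an edge between `p` and `q` with an arrowhead at `q`. -/
def ArrowInto (p q : V) : Prop := G.dir p q ∨ G.bi p q ∨ G.bi q p

/-- `v` is a collider between `u` and `w`: both edges have arrowheads into `v`. -/
def IsCollider (u v w : V) : Prop := G.ArrowInto u v ∧ G.ArrowInto w v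

/-- `z` is a descendant of `v` (along directed edges, reflexively). -/
def Descendant (v z : V) : Prop := Relation.ReflTransGen G.dir v z

/-- `p 0, p 1, …, p k` is a path from `x` to `y`: consecutive vertices adjacent,
no repeated vertices. -/
def IsPath (k : ℕ) (p : ℕ → V) (x y : V) : Prop :=
  p 0 = x ∧ p k = y ∧ (∀ i < k, G.Adj (p i) (p (i + 1))) ∧
    ∀ i j, i ≤ k → j ≤ k → p i = p j → i = j

/-- The path `p 0, …, p k` is blocked by the conditioning set `Z`: some interior
vertex is a collider with no descendant in `Z`, or a non-collider in `Z`. -/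
def Blocked (Z : Set V) (k : ℕ) (p : ℕ → V) : Prop :=
  ∃ i, 0 < i ∧ i < k ∧
    ((G.IsCollider (p (i - 1)) (p i) (p (i + 1)) ∧ ∀ z ∈ Z, ¬ G.Descendant (p i) z) ∨
      (¬ G.IsCollider (p (i - 1)) (p i) (p (i + 1)) ∧ p i ∈ Z))

/-- m-separation: every path from `x` to `y` is blocked by `Z`. -/
def MSep (x y : V) (Z : Set V) : Prop :=
  ∀ (k : ℕ) (p : ℕ → V), G.IsPath k p x y → G.Blocked Z k p

/-- A v-structure `a → b ← c` (arrowheads into `b`, endpoints nonadjacent). -/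
def VStruct (a b c : V) : Prop :=
  a ≠ c ∧ ¬ G.Adj a c ∧ G.ArrowInto a b ∧ G.ArrowInto c b

end MixedGraph

/-- A relation is acyclic if it has no directed cycles. -/
def IsAcyclicRel {α : Type*} (E : α → α → Prop) : Prop :=
  ∀ a, ¬ Relation.TransGen E a a

/-- The unrolled mixed graph `ICM(G)` of a DAG with edge relation `E` on `Fin d`:
a copy of the DAG at each sample index `n`, and bidirected edges between the
copies `X_{i;n} ↔ X_{i;m}` of each variable. -/
def icm {d : ℕ} (E : Fin d → Fin d → Prop) : MixedGraph (Fin d × ℕ) where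
  dir p q := p.2 = q.2 ∧ E p.1 q.1
  bi p q := p.1 = q.1 ∧ p.2 ≠ q.2

/-- Reversing an edge `i → j` of a DAG (keeping the skeleton) changes the
v-structures of the unrolled graph: `X_{i;n} → X_{j;n} ↔ X_{j;m}` is a
v-structure in `ICM(G₁)` but the corresponding triple is not one in `ICM(G₂)`. -/
theorem stmt12 {d : ℕ} (E₁ E₂ : Fin d → Fin d → Prop)
    (h₁ : IsAcyclicRel E₁) (h₂ : IsAcyclicRel E₂)
    (hskel : ∀ a b, (E₁ a b ∨ E₁ b a) ↔ (E₂ a b ∨ E₂ b a))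
    (i j : Fin d) (hij : E₁ i j) (hji : E₂ j i) (n m : ℕ) (hnm : n ≠ m) :
    (icm E₁).VStruct (i, n) (j, n) (j, m) ∧
      ¬ (icm E₂).VStruct (i, n) (j, n) (j, m) := by
  have hij' : i ≠ j := by
    intro h; exact h₁ i (Relation.TransGen.single (h ▸ hij))
  have hji' : ¬ E₂ i j := by
    intro h; exact h₂ i (Relation.TransGen.head h (Relation.TransGen.single hji))
  constructor
  · refine ⟨?_, ?_, ?_, ?_⟩
    · intro h; exact hij' (congrArg Prod.fst h)
    · rintro (⟨h, _⟩ | ⟨h, _⟩ | ⟨h, _⟩ | ⟨h, _⟩)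
      · exact hnm h
      · exact hnm h.symm
      · exact hij' h
      · exact hij' h.symm
    · exact Or.inl ⟨rfl, hij⟩
    · exact Or.inr (Or.inl ⟨rfl, hnm.symm⟩)
  · rintro ⟨_, _, (⟨_, h⟩ | ⟨h, _⟩ | ⟨h, _⟩), _⟩
    · exact hji' h
    · exact hij' h
    · exact hij' h.symm
end

section
/- For any two DAGs G_1 and G_2 on the same set of d variables, the unrolled mixed graphs satisfy: ICM(G_1) and ICM(G_2) encode the same conditional independence relations (via m-separation) if and only if G_1 = G_2. In other words, the map G ↦ I(ICM(G)) is injective on DAGs. -/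
section Aux

open Relation MixedGraph

variable {V : Type*}

/-- Tail-following to the left: an arrowhead into `p t` from the right forces,
while no collider is met, directed edges leftward; so `p t` reaches `p 0` or a collider. -/
lemma reachAux_left (M : MixedGraph V) {k : ℕ} {p : ℕ → V}
    (hadj : ∀ i < k, M.Adj (p i) (p (i + 1))) :
    ∀ t, t < k → M.ArrowInto (p (t + 1)) (p t) →
      ∃ s, (s = 0 ∨ (0 < s ∧ s < k ∧ M.IsCollider (p (s - 1)) (p s) (p (s + 1)))) ∧
        Relation.ReflTransGen M.dir (p t) (p s) := by
  intro t
  induction t using Nat.strong_induction_on with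
  | _ t ih =>
    intro htk har
    rcases Nat.eq_zero_or_pos t with rfl | hpos
    · exact ⟨0, Or.inl rfl, .refl⟩
    obtain ⟨u, rfl⟩ : ∃ u, t = u + 1 := ⟨t - 1, by omega⟩
    by_cases hc : M.ArrowInto (p u) (p (u + 1))
    · exact ⟨u + 1, Or.inr ⟨by omega, htk, by simpa using ⟨hc, har⟩⟩, .refl⟩
    · have hdir : M.dir (p (u + 1)) (p u) := by
        rcases hadj u (by omega) with h | h | h | h
        · exact absurd (Or.inl h) hc
        · exact h
        · exact absurd (Or.inr (Or.inl h)) hc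
        · exact absurd (Or.inr (Or.inr h)) hc
      obtain ⟨s, hs, hr⟩ := ih u (by omega) (by omega) (Or.inl hdir)
      exact ⟨s, hs, .head hdir hr⟩

/-- Tail-following to the right. -/
lemma reachAux_right (M : MixedGraph V) {k : ℕ} {p : ℕ → V}
    (hadj : ∀ i < k, M.Adj (p i) (p (i + 1))) :
    ∀ t, t < k → M.ArrowInto (p t) (p (t + 1)) →
      ∃ s, (s = k ∨ (0 < s ∧ s < k ∧ M.IsCollider (p (s - 1)) (p s) (p (s + 1)))) ∧
        Relation.ReflTransGen M.dir (p (t + 1)) (p s) := by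
  suffices H : ∀ n t, k - t ≤ n → t < k → M.ArrowInto (p t) (p (t + 1)) →
      ∃ s, (s = k ∨ (0 < s ∧ s < k ∧ M.IsCollider (p (s - 1)) (p s) (p (s + 1)))) ∧
        Relation.ReflTransGen M.dir (p (t + 1)) (p s) by
    exact fun t => H k t (by omega)
  intro n
  induction n with
  | zero => intro t h1 h2; omega
  | succ n ihn =>
    intro t hle htk har
    rcases eq_or_lt_of_le (Nat.succ_le_of_lt htk) with heq | hlt
    · exact ⟨t + 1, Or.inl heq, .refl⟩
    · by_cases hc : M.ArrowInto (p (t + 1 + 1)) (p (t + 1))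
      · exact ⟨t + 1, Or.inr ⟨by omega, by omega, by simpa using ⟨har, hc⟩⟩, .refl⟩
      · have hdir : M.dir (p (t + 1)) (p (t + 1 + 1)) := by
          rcases hadj (t + 1) (by omega) with h | h | h | h
          · exact h
          · exact absurd (Or.inl h) hc
          · exact absurd (Or.inr (Or.inr h)) hc
          · exact absurd (Or.inr (Or.inl h)) hc
        obtain ⟨s, hs, hr⟩ := ihn (t + 1) (by omega) (by omega) (Or.inl hdir)
        exact ⟨s, hs, .head hdir hr⟩

/-- Every vertex of a path reaches (along directed edges) an endpoint or a collider of the path. -/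
lemma reach (M : MixedGraph V) {k : ℕ} {p : ℕ → V} {x y : V} (hp : M.IsPath k p x y) :
    ∀ t ≤ k, ∃ s, (s = 0 ∨ s = k ∨ (0 < s ∧ s < k ∧ M.IsCollider (p (s - 1)) (p s) (p (s + 1)))) ∧
      Relation.ReflTransGen M.dir (p t) (p s) := by
  obtain ⟨h0, hk, hadj, hinj⟩ := hp
  intro t htk
  rcases Nat.eq_zero_or_pos t with rfl | hpos
  · exact ⟨0, Or.inl rfl, .refl⟩
  rcases eq_or_lt_of_le htk with rfl | htlt
  · exact ⟨t, Or.inr (Or.inl rfl), .refl⟩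
  by_cases hc : M.IsCollider (p (t - 1)) (p t) (p (t + 1))
  · exact ⟨t, Or.inr (Or.inr ⟨hpos, htlt, hc⟩), .refl⟩
  obtain ⟨u, rfl⟩ : ∃ u, t = u + 1 := ⟨t - 1, by omega⟩
  rw [show u + 1 - 1 = u from rfl] at hc
  rw [MixedGraph.IsCollider, not_and_or] at hc
  rcases hc with hc | hc
  · -- no arrowhead from the left: directed edge out to the left
    have hdir : M.dir (p (u + 1)) (p u) := by
      rcases hadj u (by omega) with h | h | h | h
      · exact absurd (Or.inl h) hc
      · exact h
      · exact absurd (Or.inr (Or.inl h)) hc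
      · exact absurd (Or.inr (Or.inr h)) hc
    obtain ⟨s, hs, hr⟩ := reachAux_left M hadj u (by omega) (Or.inl hdir)
    refine ⟨s, ?_, .head hdir hr⟩
    rcases hs with h | h
    · exact Or.inl h
    · exact Or.inr (Or.inr h)
  · have hdir : M.dir (p (u + 1)) (p (u + 1 + 1)) := by
      rcases hadj (u + 1) htlt with h | h | h | h
      · exact h
      · exact absurd (Or.inl h) hc
      · exact absurd (Or.inr (Or.inr h)) hc
      · exact absurd (Or.inr (Or.inl h)) hc
    obtain ⟨s, hs, hr⟩ := reachAux_right M hadj (u + 1) htlt (Or.inl hdir)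
    refine ⟨s, ?_, .head hdir hr⟩
    rcases hs with h | h
    · exact Or.inr (Or.inl h)
    · exact Or.inr (Or.inr h)

variable {d : ℕ} {E : Fin d → Fin d → Prop}

lemma desc_proj {a b : Fin d × ℕ} (h : (icm E).Descendant a b) :
    a.2 = b.2 ∧ Relation.ReflTransGen E a.1 b.1 := by
  induction h with
  | refl => exact ⟨rfl, .refl⟩
  | tail _ hbc ih =>
    have hbc' : _ ∧ E _ _ := hbc
    exact ⟨ih.1.trans hbc'.1, ih.2.trans (Relation.ReflTransGen.single hbc'.2)⟩

lemma arrow_same_sample {a b : Fin d × ℕ} (h : (icm E).ArrowInto a b) (hs : a.2 = b.2) :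
    E a.1 b.1 := by
  rcases h with h | h | h
  · exact (show _ ∧ E a.1 b.1 from h).2
  · exact absurd hs (show a.1 = b.1 ∧ a.2 ≠ b.2 from h).2
  · exact absurd hs.symm (show b.1 = a.1 ∧ b.2 ≠ a.2 from h).2

lemma arrow_cases {a b : Fin d × ℕ} (h : (icm E).ArrowInto a b) :
    (a.2 = b.2 ∧ E a.1 b.1) ∨ (a.1 = b.1 ∧ a.2 ≠ b.2) := by
  rcases h with h | h | h
  · exact Or.inl h
  · exact Or.inr h
  · have h' : b.1 = a.1 ∧ b.2 ≠ a.2 := h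
    exact Or.inr ⟨h'.1.symm, fun he => h'.2 he.symm⟩

end Aux

section Claims

open Relation MixedGraph

variable {d : ℕ} {E : Fin d → Fin d → Prop}

/-- If `i` and `j` are nonadjacent in the DAG, then `(i,0)` and `(j,0)` are m-separated
in `icm E` by the set of (sample-0 copies of) ancestors of `i` and `j`. -/
lemma claimA (hE : IsAcyclicRel E) {i j : Fin d} (hij : i ≠ j)
    (e1 : ¬ E i j) (e2 : ¬ E j i) :
    (icm E).MSep (i, 0) (j, 0)
      {q : Fin d × ℕ | q.2 = 0 ∧ (Relation.TransGen E q.1 i ∨ Relation.TransGen E q.1 j)} := by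
  set Z : Set (Fin d × ℕ) :=
    {q : Fin d × ℕ | q.2 = 0 ∧ (Relation.TransGen E q.1 i ∨ Relation.TransGen E q.1 j)} with hZdef
  intro k p hp
  by_contra hnb
  obtain ⟨h0, hk, hadj, hinj⟩ := hp
  have hnc : ∀ t, 0 < t → t < k →
      ¬ (icm E).IsCollider (p (t - 1)) (p t) (p (t + 1)) → p t ∉ Z :=
    fun t a b hc hz => hnb ⟨t, a, b, Or.inr ⟨hc, hz⟩⟩
  have hcol : ∀ t, 0 < t → t < k →
      (icm E).IsCollider (p (t - 1)) (p t) (p (t + 1)) →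
      ∃ z ∈ Z, (icm E).Descendant (p t) z := by
    intro t a b hc; by_contra h; push_neg at h
    exact hnb ⟨t, a, b, Or.inl ⟨hc, h⟩⟩
  -- every interior collider lies in Z
  have colZ : ∀ t, 0 < t → t < k →
      (icm E).IsCollider (p (t - 1)) (p t) (p (t + 1)) → p t ∈ Z := by
    intro t a b hc
    obtain ⟨z, hz, hd⟩ := hcol t a b hc
    obtain ⟨hz0, hzA⟩ := hz
    obtain ⟨hs, hr⟩ := desc_proj hd
    refine ⟨hs.trans hz0, ?_⟩
    rcases hzA with h | h
    · exact Or.inl (Relation.TransGen.trans_right hr h)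
    · exact Or.inr (Relation.TransGen.trans_right hr h)
  -- every vertex lies at sample 0, with value an ancestor of i or j, or i or j itself
  have hvert : ∀ t ≤ k, (p t).2 = 0 ∧
      (Relation.TransGen E (p t).1 i ∨ Relation.TransGen E (p t).1 j ∨
        (p t).1 = i ∨ (p t).1 = j) := by
    intro t htk
    obtain ⟨s, hs, hr⟩ := reach (icm E) ⟨h0, hk, hadj, hinj⟩ t htk
    obtain ⟨hss, hrr⟩ := desc_proj hr
    rcases hs with rfl | rfl | ⟨hs1, hs2, hsc⟩
    · rw [h0] at hss hrr
      refine ⟨hss, ?_⟩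
      rcases Relation.reflTransGen_iff_eq_or_transGen.1 hrr with h | h
      · exact Or.inr (Or.inr (Or.inl h.symm))
      · exact Or.inl h
    · rw [hk] at hss hrr
      refine ⟨hss, ?_⟩
      rcases Relation.reflTransGen_iff_eq_or_transGen.1 hrr with h | h
      · exact Or.inr (Or.inr (Or.inr h.symm))
      · exact Or.inr (Or.inl h)
    · obtain ⟨hsam, hA⟩ := colZ s hs1 hs2 hsc
      refine ⟨hss.trans hsam, ?_⟩
      rcases hA with h | h
      · exact Or.inl (Relation.TransGen.trans_right hrr h)
      · exact Or.inr (Or.inl (Relation.TransGen.trans_right hrr h))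
  -- all interior vertices are colliders
  have hallcol : ∀ t, 0 < t → t < k →
      (icm E).IsCollider (p (t - 1)) (p t) (p (t + 1)) := by
    intro t a b
    by_contra hc
    have hz := hnc t a b hc
    obtain ⟨hs0, hv⟩ := hvert t (le_of_lt b)
    rcases hv with h | h | h | h
    · exact hz ⟨hs0, Or.inl h⟩
    · exact hz ⟨hs0, Or.inr h⟩
    · have : p t = p 0 := by rw [h0]; exact Prod.ext h hs0
      have := hinj t 0 (le_of_lt b) (Nat.zero_le k) this
      omega
    · have : p t = p k := by rw [hk]; exact Prod.ext h hs0
      have := hinj t k (le_of_lt b) (le_refl k) this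
      omega
  -- now bound k
  match k, hk, hadj, hinj, hnc, hcol, colZ, hvert, hallcol with
  | 0, hk, _, _, _, _, _, _, _ =>
    rw [h0, Prod.mk.injEq] at hk
    exact hij hk.1
  | 1, hk, hadj, _, _, _, _, _, _ =>
    have := hadj 0 one_pos
    rw [h0, hk] at this
    rcases this with h | h | h | h
    · exact e1 (show _ ∧ E i j from h).2
    · exact e2 (show _ ∧ E j i from h).2
    · exact hij (show (i, (0:ℕ)).1 = _ ∧ _ from h).1
    · exact hij (show (j, (0:ℕ)).1 = _ ∧ _ from h).1.symm
  | 2, hk, hadj, hinj, hnc, hcol, colZ, hvert, hallcol =>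
    have hc1 := hallcol 1 one_pos one_lt_two
    have h1Z := colZ 1 one_pos one_lt_two hc1
    obtain ⟨h1s, h1A⟩ := h1Z
    obtain ⟨ha1, ha2⟩ := hc1
    rw [show (1:ℕ) - 1 = 0 from rfl, h0] at ha1
    rw [show (1:ℕ) + 1 = 2 from rfl, hk] at ha2
    have eic : E i (p 1).1 := arrow_same_sample ha1 h1s.symm
    have ejc : E j (p 1).1 := arrow_same_sample ha2 h1s.symm
    rcases h1A with h | h
    · exact hE i ((Relation.TransGen.single eic).trans h)
    · exact hE j ((Relation.TransGen.single ejc).trans h)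
  | (k' + 3), hk, hadj, hinj, hnc, hcol, colZ, hvert, hallcol =>
    have hc1 := hallcol 1 one_pos (by omega)
    have hc2 := hallcol 2 two_pos (by omega)
    have h1Z := colZ 1 one_pos (by omega) hc1
    have h2Z := colZ 2 two_pos (by omega) hc2
    -- edge between p 1 and p 2, arrowheads both ways, samples both 0
    have e21 : E (p 2).1 (p 1).1 :=
      arrow_same_sample (by exact hc1.2) (h2Z.1.trans h1Z.1.symm)
    have e12 : E (p 1).1 (p 2).1 :=
      arrow_same_sample (by exact hc2.1) (h1Z.1.trans h2Z.1.symm)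
    exact hE (p 1).1 ((Relation.TransGen.single e12).trans (Relation.TransGen.single e21))

end Claims

section ClaimB

open Relation MixedGraph

variable {d : ℕ} {E : Fin d → Fin d → Prop}

/-- If `j → i` (and not `i → j`) in the DAG, then `(i,0)` and `(j,1)` are m-separated
in `icm E` by the ancestors of `i,j` at samples 0 and 1, together with `(j,0)`. -/
lemma claimB (hE : IsAcyclicRel E) {i j : Fin d} (hji : E j i) (e1 : ¬ E i j) :
    (icm E).MSep (i, 0) (j, 1)
      {q : Fin d × ℕ |
        (q.2 = 0 ∧ (q.1 = j ∨ Relation.TransGen E q.1 i ∨ Relation.TransGen E q.1 j)) ∨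
        (q.2 = 1 ∧ (Relation.TransGen E q.1 i ∨ Relation.TransGen E q.1 j))} := by
  set Z : Set (Fin d × ℕ) :=
    {q : Fin d × ℕ |
      (q.2 = 0 ∧ (q.1 = j ∨ Relation.TransGen E q.1 i ∨ Relation.TransGen E q.1 j)) ∨
      (q.2 = 1 ∧ (Relation.TransGen E q.1 i ∨ Relation.TransGen E q.1 j))} with hZdef
  have hij : i ≠ j := by rintro rfl; exact hE i (Relation.TransGen.single hji)
  have hiA : ¬ (Relation.TransGen E i i ∨ Relation.TransGen E i j) := by
    rintro (h | h)
    · exact hE i h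
    · exact hE i (h.trans (Relation.TransGen.single hji))
  intro k p hp
  by_contra hnb
  obtain ⟨h0, hk, hadj, hinj⟩ := hp
  have hnc : ∀ t, 0 < t → t < k →
      ¬ (icm E).IsCollider (p (t - 1)) (p t) (p (t + 1)) → p t ∉ Z :=
    fun t a b hc hz => hnb ⟨t, a, b, Or.inr ⟨hc, hz⟩⟩
  have hcol : ∀ t, 0 < t → t < k →
      (icm E).IsCollider (p (t - 1)) (p t) (p (t + 1)) →
      ∃ z ∈ Z, (icm E).Descendant (p t) z := by
    intro t a b hc; by_contra h; push_neg at h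
    exact hnb ⟨t, a, b, Or.inl ⟨hc, h⟩⟩
  -- every interior collider lies in Z
  have colZ : ∀ t, 0 < t → t < k →
      (icm E).IsCollider (p (t - 1)) (p t) (p (t + 1)) → p t ∈ Z := by
    intro t a b hc
    obtain ⟨z, hz, hd⟩ := hcol t a b hc
    obtain ⟨hs, hr⟩ := desc_proj hd
    rcases hz with ⟨hz0, hzA⟩ | ⟨hz1, hzA⟩
    · refine Or.inl ⟨hs.trans hz0, ?_⟩
      rcases hzA with h | h | h
      · rw [h] at hr
        rcases Relation.reflTransGen_iff_eq_or_transGen.1 hr with h' | h'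
        · exact Or.inl h'.symm
        · exact Or.inr (Or.inr h')
      · exact Or.inr (Or.inl (Relation.TransGen.trans_right hr h))
      · exact Or.inr (Or.inr (Relation.TransGen.trans_right hr h))
    · refine Or.inr ⟨hs.trans hz1, ?_⟩
      rcases hzA with h | h
      · exact Or.inl (Relation.TransGen.trans_right hr h)
      · exact Or.inr (Relation.TransGen.trans_right hr h)
  -- every vertex: sample 0 with value i, j or an ancestor; or sample 1 with value j or an ancestor
  have hvert : ∀ t ≤ k,
      ((p t).2 = 0 ∧ ((p t).1 = i ∨ (p t).1 = j ∨
        Relation.TransGen E (p t).1 i ∨ Relation.TransGen E (p t).1 j)) ∨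
      ((p t).2 = 1 ∧ ((p t).1 = j ∨
        Relation.TransGen E (p t).1 i ∨ Relation.TransGen E (p t).1 j)) := by
    intro t htk
    obtain ⟨s, hs, hr⟩ := reach (icm E) ⟨h0, hk, hadj, hinj⟩ t htk
    obtain ⟨hss, hrr⟩ := desc_proj hr
    rcases hs with rfl | rfl | ⟨hs1, hs2, hsc⟩
    · rw [h0] at hss hrr
      refine Or.inl ⟨hss, ?_⟩
      rcases Relation.reflTransGen_iff_eq_or_transGen.1 hrr with h | h
      · exact Or.inl h.symm
      · exact Or.inr (Or.inr (Or.inl h))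
    · rw [hk] at hss hrr
      refine Or.inr ⟨hss, ?_⟩
      rcases Relation.reflTransGen_iff_eq_or_transGen.1 hrr with h | h
      · exact Or.inl h.symm
      · exact Or.inr (Or.inr h)
    · rcases colZ s hs1 hs2 hsc with ⟨hsam, hA⟩ | ⟨hsam, hA⟩
      · refine Or.inl ⟨hss.trans hsam, ?_⟩
        rcases hA with h | h | h
        · rw [h] at hrr
          rcases Relation.reflTransGen_iff_eq_or_transGen.1 hrr with h' | h'
          · exact Or.inr (Or.inl h'.symm)
          · exact Or.inr (Or.inr (Or.inr h'))
        · exact Or.inr (Or.inr (Or.inl (Relation.TransGen.trans_right hrr h)))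
        · exact Or.inr (Or.inr (Or.inr (Relation.TransGen.trans_right hrr h)))
      · refine Or.inr ⟨hss.trans hsam, ?_⟩
        rcases hA with h | h
        · exact Or.inr (Or.inl (Relation.TransGen.trans_right hrr h))
        · exact Or.inr (Or.inr (Relation.TransGen.trans_right hrr h))
  -- all interior vertices are colliders
  have hallcol : ∀ t, 0 < t → t < k →
      (icm E).IsCollider (p (t - 1)) (p t) (p (t + 1)) := by
    intro t a b
    by_contra hc
    have hz := hnc t a b hc
    rcases hvert t (le_of_lt b) with ⟨hs0, hv⟩ | ⟨hs1, hv⟩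
    · rcases hv with h | h | h | h
      · have : p t = p 0 := by rw [h0]; exact Prod.ext h hs0
        have := hinj t 0 (le_of_lt b) (Nat.zero_le k) this
        omega
      · exact hz (Or.inl ⟨hs0, Or.inl h⟩)
      · exact hz (Or.inl ⟨hs0, Or.inr (Or.inl h)⟩)
      · exact hz (Or.inl ⟨hs0, Or.inr (Or.inr h)⟩)
    · rcases hv with h | h | h
      · have : p t = p k := by rw [hk]; exact Prod.ext h hs1
        have := hinj t k (le_of_lt b) (le_refl k) this
        omega
      · exact hz (Or.inr ⟨hs1, Or.inl h⟩)
      · exact hz (Or.inr ⟨hs1, Or.inr h⟩)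
  -- consecutive interior vertices are joined by bidirected edges
  have hedge : ∀ t, 0 < t → t + 1 < k →
      (p t).1 = (p (t + 1)).1 ∧ (p t).2 ≠ (p (t + 1)).2 := by
    intro t a b
    have c1 := hallcol t a (by omega)
    have c2 := hallcol (t + 1) (by omega) b
    rw [Nat.add_sub_cancel] at c2
    have ar1 : (icm E).ArrowInto (p (t + 1)) (p t) := c1.2
    have ar2 : (icm E).ArrowInto (p t) (p (t + 1)) := c2.1
    rcases arrow_cases ar2 with ⟨hs, he⟩ | ⟨hv, hs⟩
    · have he' : E (p (t + 1)).1 (p t).1 := arrow_same_sample ar1 hs.symm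
      exact absurd ((Relation.TransGen.single he).trans (Relation.TransGen.single he'))
        (hE (p t).1)
    · exact ⟨hv, hs⟩
  -- bound k
  match k, hk, hadj, hinj, hnc, hcol, colZ, hvert, hallcol, hedge with
  | 0, hk, _, _, _, _, _, _, _, _ =>
    rw [h0, Prod.mk.injEq] at hk
    exact absurd hk.2 (by norm_num)
  | 1, hk, hadj, _, _, _, _, _, _, _ =>
    have := hadj 0 one_pos
    rw [h0, hk] at this
    rcases this with h | h | h | h
    · exact absurd (show ((i, (0:ℕ)).2 : ℕ) = (j, (1:ℕ)).2 ∧ _ from h).1 (by norm_num)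
    · exact absurd (show ((j, (1:ℕ)).2 : ℕ) = (i, (0:ℕ)).2 ∧ _ from h).1 (by norm_num)
    · exact hij (show (i, (0:ℕ)).1 = _ ∧ _ from h).1
    · exact hij (show (j, (1:ℕ)).1 = _ ∧ _ from h).1.symm
  | 2, hk, hadj, hinj, hnc, hcol, colZ, hvert, hallcol, hedge =>
    have hc1 := hallcol 1 one_pos one_lt_two
    have h1Z := colZ 1 one_pos one_lt_two hc1
    obtain ⟨ha1, ha2⟩ := hc1
    rw [show (1:ℕ) - 1 = 0 from rfl, h0] at ha1
    rw [show (1:ℕ) + 1 = 2 from rfl, hk] at ha2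
    rcases h1Z with ⟨h1s, h1A⟩ | ⟨h1s, h1A⟩
    · -- p 1 at sample 0; edge from (j,1) must be bidirected, so (p 1).1 = j
      rcases arrow_cases ha2 with ⟨hs, _⟩ | ⟨hv, _⟩
      · rw [h1s] at hs; norm_num at hs
      · -- (p 1).1 = j; then edge (i,0) → (j,0) forces E i j or i = j
        rcases arrow_cases ha1 with ⟨_, he⟩ | ⟨hv', _⟩
        · rw [hv.symm] at he; exact e1 he
        · exact hij (hv'.trans hv.symm)
    · -- p 1 at sample 1; edge from (i,0) must be bidirected, so (p 1).1 = i ∈ A: contradiction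
      rcases arrow_cases ha1 with ⟨hs, _⟩ | ⟨hv, _⟩
      · rw [h1s] at hs; norm_num at hs
      · rw [← hv] at h1A; exact hiA h1A
  | 3, hk, hadj, hinj, hnc, hcol, colZ, hvert, hallcol, hedge =>
    have hc1 := hallcol 1 one_pos (by norm_num)
    have hc2 := hallcol 2 two_pos (by norm_num)
    have h1Z := colZ 1 one_pos (by norm_num) hc1
    have h2Z := colZ 2 two_pos (by norm_num) hc2
    have hed := hedge 1 one_pos (by norm_num)
    have ha1 : (icm E).ArrowInto (p 0) (p 1) := hc1.1
    have ha2 : (icm E).ArrowInto (p 3) (p 2) := by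
      have := hc2.2; rwa [show (2:ℕ) + 1 = 3 from rfl] at this
    rw [h0] at ha1
    rw [hk] at ha2
    -- p 1 cannot be at sample 1
    have h1s0 : (p 1).2 = 0 := by
      rcases h1Z with ⟨h1s, _⟩ | ⟨h1s, h1A⟩
      · exact h1s
      · exfalso
        rcases arrow_cases ha1 with ⟨hs, _⟩ | ⟨hv, _⟩
        · rw [h1s] at hs; norm_num at hs
        · rw [← hv] at h1A; exact hiA h1A
    have h2s1 : (p 2).2 = 1 := by
      rcases h2Z with ⟨h2s, _⟩ | ⟨h2s, _⟩
      · exact absurd (h1s0.trans h2s.symm) hed.2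
      · exact h2s
    -- edges at the two ends are directed
    have heia : E i (p 1).1 := by
      rcases arrow_cases ha1 with ⟨_, he⟩ | ⟨_, hs⟩
      · exact he
      · rw [h1s0] at hs; norm_num at hs
    have heja : E j (p 2).1 := by
      rcases arrow_cases ha2 with ⟨_, he⟩ | ⟨_, hs⟩
      · exact he
      · rw [h2s1] at hs; norm_num at hs
    rw [← hed.1] at heja
    -- p 2 ∈ Z at sample 1, so (p 2).1 = (p 1).1 ∈ A
    have h2A : Relation.TransGen E (p 1).1 i ∨ Relation.TransGen E (p 1).1 j := by
      rcases h2Z with ⟨h2s, _⟩ | ⟨_, h2A⟩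
      · rw [h2s1] at h2s; norm_num at h2s
      · rwa [← hed.1] at h2A
    rcases h2A with h | h
    · exact hE i ((Relation.TransGen.single heia).trans h)
    · exact hE j ((Relation.TransGen.single heja).trans h)
  | (k' + 4), hk, hadj, hinj, hnc, hcol, colZ, hvert, hallcol, hedge =>
    have hed1 := hedge 1 one_pos (by omega)
    have hed2 := hedge 2 two_pos (by omega)
    have h1Z := colZ 1 one_pos (by omega) (hallcol 1 one_pos (by omega))
    have h2Z := colZ 2 two_pos (by omega) (hallcol 2 two_pos (by omega))
    have h3Z := colZ 3 (by omega) (by omega) (hallcol 3 (by omega) (by omega))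
    have hs1 : (p 1).2 = 0 ∨ (p 1).2 = 1 := by
      rcases h1Z with ⟨h, _⟩ | ⟨h, _⟩ <;> [exact Or.inl h; exact Or.inr h]
    have hs2 : (p 2).2 = 0 ∨ (p 2).2 = 1 := by
      rcases h2Z with ⟨h, _⟩ | ⟨h, _⟩ <;> [exact Or.inl h; exact Or.inr h]
    have hs3 : (p 3).2 = 0 ∨ (p 3).2 = 1 := by
      rcases h3Z with ⟨h, _⟩ | ⟨h, _⟩ <;> [exact Or.inl h; exact Or.inr h]
    simp only [show (1:ℕ) + 1 = 2 from rfl, show (2:ℕ) + 1 = 3 from rfl] at hed1 hed2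
    have hvv : (p 1).1 = (p 3).1 := hed1.1.trans hed2.1
    have hss : (p 1).2 = (p 3).2 := by
      have n1 := hed1.2; have n2 := hed2.2
      rcases hs1 with h1 | h1 <;> rcases hs2 with h2 | h2 <;> rcases hs3 with h3 | h3 <;> omega
    have : p 1 = p 3 := Prod.ext hvv hss
    have := hinj 1 3 (by omega) (by omega) this
    omega

end ClaimB

section Main

open Relation MixedGraph

variable {V : Type*} {d : ℕ}

lemma adj_not_msep (M : MixedGraph V) {x y : V} (hadj : M.Adj x y) (hxy : x ≠ y)
    (Z : Set V) : ¬ M.MSep x y Z := by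
  intro h
  have hp : M.IsPath 1 (fun t => if t = 0 then x else y) x y := by
    refine ⟨rfl, rfl, ?_, ?_⟩
    · intro t ht
      interval_cases t
      simpa using hadj
    · intro a b ha hb hab
      interval_cases a <;> interval_cases b <;> simp_all
  obtain ⟨t, ht1, ht2, _⟩ := h 1 _ hp
  omega

lemma edge_not_msep {E : Fin d → Fin d → Prop} (hE : IsAcyclicRel E) {i j : Fin d}
    (hij : E i j) {Z : Set (Fin d × ℕ)} (hZ : ((j, 0) : Fin d × ℕ) ∈ Z) :
    ¬ (icm E).MSep (i, 0) (j, 1) Z := by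
  have hne : i ≠ j := by rintro rfl; exact hE i (Relation.TransGen.single hij)
  intro h
  set p : ℕ → Fin d × ℕ := fun t => if t = 0 then (i, 0) else if t = 1 then (j, 0) else (j, 1)
    with hpdef
  have hp0 : p 0 = (i, 0) := rfl
  have hp1 : p 1 = (j, 0) := rfl
  have hp2 : p 2 = (j, 1) := rfl
  have hp : (icm E).IsPath 2 p (i, 0) (j, 1) := by
    refine ⟨rfl, rfl, ?_, ?_⟩
    · intro t ht
      interval_cases t
      · rw [hp0, hp1]
        exact Or.inl ⟨rfl, hij⟩
      · rw [hp1, hp2]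
        exact Or.inr (Or.inr (Or.inl ⟨rfl, by norm_num⟩))
    · intro a b ha hb hab
      interval_cases a <;> interval_cases b <;>
        simp_all [hpdef, Prod.ext_iff]
  obtain ⟨t, ht1, ht2, hblk⟩ := h 2 p hp
  have ht : t = 1 := by omega
  subst ht
  rw [show (1:ℕ) - 1 = 0 from rfl, hp0, hp1, hp2] at hblk
  rcases hblk with ⟨_, hnd⟩ | ⟨hnc, _⟩
  · exact hnd (j, 0) hZ Relation.ReflTransGen.refl
  · exact hnc ⟨Or.inl ⟨rfl, hij⟩, Or.inr (Or.inl ⟨rfl, by norm_num⟩)⟩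

lemma forward_dir {E₁ E₂ : Fin d → Fin d → Prop}
    (h₁ : IsAcyclicRel E₁) (h₂ : IsAcyclicRel E₂)
    (h : ∀ (x y : Fin d × ℕ) (Z : Set (Fin d × ℕ)),
        (icm E₁).MSep x y Z ↔ (icm E₂).MSep x y Z)
    {i j : Fin d} (hij : E₁ i j) : E₂ i j := by
  have hne : i ≠ j := by rintro rfl; exact h₁ i (Relation.TransGen.single hij)
  have hxy : ((i, 0) : Fin d × ℕ) ≠ (j, 0) := fun he => hne (congrArg Prod.fst he)
  have hskel : E₂ i j ∨ E₂ j i := by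
    by_contra hn
    push_neg at hn
    have hsep := claimA h₂ hne hn.1 hn.2
    exact adj_not_msep (icm E₁) (x := (i, 0)) (y := (j, 0)) (Or.inl ⟨rfl, hij⟩) hxy _ ((h (i, 0) (j, 0) _).2 hsep)
  rcases hskel with h' | h'
  · exact h'
  · by_contra hn
    have hsep := claimB h₂ h' hn
    exact edge_not_msep h₁ hij (Or.inl ⟨rfl, Or.inl rfl⟩) ((h (i, 0) (j, 1) _).2 hsep)

end Main


/-- Identifiability: two DAGs have unrolled graphs encoding the same m-separation
statements iff the DAGs are equal; i.e. `G ↦ I(ICM(G))` is injective on DAGs. -/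
theorem stmt13 {d : ℕ} (E₁ E₂ : Fin d → Fin d → Prop)
    (h₁ : IsAcyclicRel E₁) (h₂ : IsAcyclicRel E₂) :
    (∀ (x y : Fin d × ℕ) (Z : Set (Fin d × ℕ)),
        (icm E₁).MSep x y Z ↔ (icm E₂).MSep x y Z) ↔ E₁ = E₂ := by
  constructor
  · intro h
    funext i j
    exact propext ⟨forward_dir h₁ h₂ h, forward_dir h₂ h₁ (fun x y Z => (h x y Z).symm)⟩
  · rintro rfl
    exact fun _ _ _ => Iff.rfl
end

section
/- In the unrolled graph ICM(G) of a DAG G, a node X_{i;n} has no outgoing directed edges (is a first-order sink) if and only if for every m ≠ n and every j ≠ i, X_{i;n} is m-separated from X_{j;m} given the conditioning set {X_{k;n} : k ≠ i}. -/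
/-- First-order sink condition: in `ICM(G)`, the node `X_{i;n}` has no outgoing
directed edges iff for every `m ≠ n` and `j ≠ i`, `X_{i;n}` is m-separated from
`X_{j;m}` given `{X_{k;n} : k ≠ i}`. -/
theorem stmt14 {d : ℕ} (E : Fin d → Fin d → Prop) (hE : IsAcyclicRel E)
    (i : Fin d) (n : ℕ) :
    (∀ j, ¬ E i j) ↔
      ∀ m : ℕ, m ≠ n → ∀ j, j ≠ i →
        (icm E).MSep (i, n) (j, m) {p | p.2 = n ∧ p.1 ≠ i} := by
  classical
  constructor
  · intro hsink m hm j hj k p hp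
    obtain ⟨h0, hk, hadj, hinj⟩ := hp
    have hk1 : 1 ≤ k := by
      rcases Nat.eq_zero_or_pos k with h | h
      · exfalso; subst h; rw [h0] at hk
        exact hm (congrArg Prod.snd hk).symm
      · exact h
    have hex : ∃ r, r < k ∧ (p (r+1)).1 ≠ i := by
      refine ⟨k-1, by omega, ?_⟩
      rw [show k-1+1 = k by omega, hk]; exact hj
    set r := Nat.find hex with hrdef
    obtain ⟨hrk, hrne⟩ := Nat.find_spec hex
    have hvar : ∀ s ≤ r, (p s).1 = i := by
      intro s hs
      induction s with
      | zero => rw [h0]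
      | succ t ih =>
        have ht : t < r := hs
        have := Nat.find_min hex ht
        push_neg at this
        exact this (by omega)
    have hri : (p r).1 = i := hvar r le_rfl
    -- analyze the edge from p r to p (r+1)
    have hedge : (p (r+1)).2 = (p r).2 ∧ E (p (r+1)).1 (p r).1 := by
      have := hadj r hrk
      rcases this with h | h | h | h
      · exact absurd h.2 (by rw [hri]; exact hsink _)
      · exact h
      · exact absurd h.1 (by rw [hri]; exact fun e => hrne e.symm)
      · exact absurd h.1 (by rw [hri]; exact hrne)
    by_cases htn : (p r).2 = n
    · -- block at r+1 : non-collider in Z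
      have hrk1 : r + 1 < k := by
        rcases Nat.lt_or_ge (r+1) k with h | h
        · exact h
        · exfalso
          have hek : r + 1 = k := by omega
          rw [hek, hk] at hedge
          exact hm (hedge.1.trans htn)
      refine ⟨r+1, Nat.succ_pos _, hrk1, Or.inr ⟨?_, ?_⟩⟩
      · rintro ⟨ha, -⟩
        simp only [Nat.add_sub_cancel] at ha
        rcases ha with h | h | h
        · have h2 : E (p r).1 (p (r+1)).1 := h.2
          rw [hri] at h2; exact hsink _ h2
        · exact hrne (h.1.symm.trans hri)
        · exact hrne (h.1.trans hri)
      · exact ⟨hedge.1.trans htn, hrne⟩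
    · -- block at r : collider with no descendant in Z
      have hr0 : 0 < r := by
        rcases Nat.eq_zero_or_pos r with h | h
        · exfalso; rw [h, h0] at htn; exact htn rfl
        · exact h
      have hprev : (p (r-1)).1 = i := hvar _ (by omega)
      refine ⟨r, hr0, hrk, Or.inl ⟨⟨?_, ?_⟩, ?_⟩⟩
      · -- arrow into p r from p (r-1) : bidirected edge between copies of i
        have := hadj (r-1) (by omega)
        rw [show r - 1 + 1 = r by omega] at this
        rcases this with h | h | h | h
        · exact absurd h.2 (by rw [hprev]; exact hsink _)
        · exact absurd h.2 (by rw [hri]; exact hsink _)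
        · exact Or.inr (Or.inl h)
        · exact Or.inr (Or.inr h)
      · exact Or.inl hedge
      · rintro z ⟨hz1, hz2⟩ hdesc
        rcases (Relation.ReflTransGen.cases_head hdesc) with h | ⟨c, hc, -⟩
        · exact hz2 (h ▸ hri)
        · have hc2 : E (p r).1 c.1 := hc.2
          rw [hri] at hc2; exact hsink _ hc2
  · intro h
    by_contra hne
    push_neg at hne
    obtain ⟨j0, hj0⟩ := hne
    have hji : j0 ≠ i := by
      intro hh; rw [hh] at hj0
      exact hE i (Relation.TransGen.single hj0)
    set q : ℕ → Fin d × ℕ :=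
      fun s => if s = 0 then (i,n) else if s = 1 then (j0,n) else (j0,n+1) with hq
    have e0 : q 0 = (i,n) := rfl
    have e1 : q 1 = (j0,n) := rfl
    have e2 : q 2 = (j0,n+1) := rfl
    have hpath : (icm E).IsPath 2 q (i,n) (j0,n+1) := by
      refine ⟨rfl, rfl, ?_, ?_⟩
      · intro s hs
        interval_cases s
        · show (icm E).Adj (i,n) (j0,n)
          exact Or.inl ⟨rfl, hj0⟩
        · show (icm E).Adj (j0,n) (j0,n+1)
          exact Or.inr (Or.inr (Or.inl ⟨rfl, by omega⟩))
      · intro a b ha hb hab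
        interval_cases a <;> interval_cases b <;>
          simp only [e0, e1, e2, Prod.mk.injEq] at hab <;>
          first
            | rfl
            | (obtain ⟨h1, h2⟩ := hab
               first
                 | exact absurd h1 (Ne.symm hji)
                 | exact absurd h1 hji
                 | omega)
    obtain ⟨s, hs0, hs2, hb⟩ := h (n+1) (by omega) j0 hji 2 q hpath
    have hs1 : s = 1 := by omega
    subst hs1
    rcases hb with ⟨-, hd⟩ | ⟨hnc, -⟩
    · exact hd (j0, n) ⟨rfl, hji⟩ Relation.ReflTransGen.refl
    · exact hnc (show (icm E).IsCollider (i,n) (j0,n) (j0,n+1) from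
        ⟨Or.inl ⟨rfl, hj0⟩, Or.inr (Or.inl ⟨rfl, by omega⟩)⟩)
end

section
/- In the unrolled graph of a DAG G with latent variables (θ_i → X_{i;n} for every sample index n, plus a copy of G at each n), if node X_i has an outgoing edge X_i → X_k in G for some k ≠ i, then for any two sample indices n ≠ m, the path X_{i;n} → X_{k;n} ← θ_k → X_{k;m} is active (not blocked) given the conditioning set {X_{l;n} : l ≠ i}; hence X_{i;n} and X_{k;m} are not d-separated given that set. -/
/-- The unrolled latent-variable DAG of `E`: observed nodes `X_{i;n}` and latent
nodes `θ_i`, with `θ_i → X_{i;n}` for all `n` and a copy of `E` at each `n`. -/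
def unrolled {d : ℕ} (E : Fin d → Fin d → Prop) :
    MixedGraph ((Fin d × ℕ) ⊕ Fin d) where
  dir p q :=
    (∃ i n, p = Sum.inr i ∧ q = Sum.inl (i, n)) ∨
      (∃ i j n, E i j ∧ p = Sum.inl (i, n) ∧ q = Sum.inl (j, n))
  bi _ _ := False

/-- If `X_i → X_k` in `G`, then the path
`X_{i;n} → X_{k;n} ← θ_k → X_{k;m}` is active given `{X_{l;n} : l ≠ i}`; hence
`X_{i;n}` and `X_{k;m}` are not d-separated given that set. -/
theorem stmt15 {d : ℕ} (E : Fin d → Fin d → Prop) (hE : IsAcyclicRel E)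
    (i k : Fin d) (hik : E i k) (hne : i ≠ k) (n m : ℕ) (hnm : n ≠ m)
    (Z : Set ((Fin d × ℕ) ⊕ Fin d))
    (hZ : Z = {p | ∃ l, l ≠ i ∧ p = Sum.inl (l, n)}) :
    ¬ (unrolled E).Blocked Z 3
        (fun t => if t = 0 then Sum.inl (i, n) else if t = 1 then Sum.inl (k, n)
          else if t = 2 then Sum.inr k else Sum.inl (k, m)) ∧
      ¬ (unrolled E).MSep (Sum.inl (i, n)) (Sum.inl (k, m)) Z := by
  subst hZ
  set p : ℕ → ((Fin d × ℕ) ⊕ Fin d) :=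
    (fun t => if t = 0 then Sum.inl (i, n) else if t = 1 then Sum.inl (k, n)
          else if t = 2 then Sum.inr k else Sum.inl (k, m)) with hp
  have hnb : ¬ (unrolled E).Blocked {p | ∃ l, l ≠ i ∧ p = Sum.inl (l, n)} 3 p := by
    rintro ⟨j, hj0, hj3, h⟩
    interval_cases j
    · rcases h with ⟨_, hd⟩ | ⟨hc, _⟩
      · exact hd (Sum.inl (k, n)) ⟨k, Ne.symm hne, rfl⟩ Relation.ReflTransGen.refl
      · exact hc ⟨Or.inl (Or.inr ⟨i, k, n, hik, rfl, rfl⟩),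
          Or.inl (Or.inl ⟨k, n, rfl, rfl⟩)⟩
    · rcases h with ⟨⟨_, h2⟩, _⟩ | ⟨_, hm⟩
      · have h2' : (unrolled E).ArrowInto (Sum.inl (k, m)) (Sum.inr k) := h2
        simp [MixedGraph.ArrowInto, unrolled] at h2'
      · have hm' : (Sum.inr k : (Fin d × ℕ) ⊕ Fin d) ∈
            {p : (Fin d × ℕ) ⊕ Fin d | ∃ l, l ≠ i ∧ p = Sum.inl (l, n)} := hm
        simp at hm'
  refine ⟨hnb, fun hsep => hnb (hsep 3 p ?_)⟩
  refine ⟨rfl, rfl, ?_, ?_⟩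
  · intro t ht
    interval_cases t
    · exact Or.inl (Or.inr ⟨i, k, n, hik, rfl, rfl⟩)
    · exact Or.inr (Or.inl (Or.inl ⟨k, n, rfl, rfl⟩))
    · exact Or.inl (Or.inl ⟨k, m, rfl, rfl⟩)
  · intro a b ha hb hab
    interval_cases a <;> interval_cases b <;>
      first
      | rfl
      | (exfalso; revert hab; simp [hp, hne, hnm, Ne.symm hne, Ne.symm hnm])
end

section
/- Let (X_n, Y_n)_{n∈ℕ} be a sequence of {0,1}-valued random variable pairs such that there exist independent random variables θ ∈ [0,1] with law μ and ψ = (ψ_0, ψ_1) ∈ [0,1]² with law ν satisfying, for all N and all (x_n,y_n): P(X_1=x_1,Y_1=y_1,...,X_N=x_N,Y_N=y_N) = ∫∫ Π_{n=1}^N p(y_n|x_n,ψ) p(x_n|θ) dμ(θ) dν(ψ), where p(x|θ)=θ^x(1-θ)^{1-x} and p(y|x,ψ)=ψ_x^y(1-ψ_x)^{1-y}. Then (a) the sequence of pairs is exchangeable, and (b) for every n, (Y_1,...,Y_n) is conditionally independent of X_{n+1} given (X_1,...,X_n). -/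
open MeasureTheory

namespace Stmt16Aux

noncomputable def cQ (a b : ℕ) (ψ : ℝ × ℝ) : ℝ :=
  (if a = 0 then ψ.1 else ψ.2) ^ b * (1 - if a = 0 then ψ.1 else ψ.2) ^ (1 - b)

noncomputable def cP (a : ℕ) (θ : ℝ) : ℝ := θ ^ a * (1 - θ) ^ (1 - a)

lemma measurable_cQ (a b : ℕ) : Measurable (cQ a b) := by
  unfold cQ
  by_cases h : a = 0 <;> simp only [h, if_true, if_false] <;> fun_prop

lemma measurable_cP (a : ℕ) : Measurable (cP a) := by
  unfold cP; fun_prop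

lemma cQ_mem {a b : ℕ} {ψ : ℝ × ℝ} (h : ψ ∈ Set.Icc (0:ℝ) 1 ×ˢ Set.Icc (0:ℝ) 1) :
    cQ a b ψ ∈ Set.Icc (0:ℝ) 1 := by
  obtain ⟨⟨h1, h2⟩, h3, h4⟩ := h
  unfold cQ
  set c := if a = 0 then ψ.1 else ψ.2 with hc
  have hc0 : 0 ≤ c := by rw [hc]; split <;> assumption
  have hc1 : c ≤ 1 := by rw [hc]; split <;> assumption
  constructor
  · exact mul_nonneg (pow_nonneg hc0 _) (pow_nonneg (by linarith) _)
  · exact mul_le_one₀ (pow_le_one₀ hc0 hc1) (pow_nonneg (by linarith) _)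
      (pow_le_one₀ (by linarith) (by linarith))

lemma cP_mem {a : ℕ} {θ : ℝ} (h : θ ∈ Set.Icc (0:ℝ) 1) :
    cP a θ ∈ Set.Icc (0:ℝ) 1 := by
  obtain ⟨h1, h2⟩ := h
  unfold cP
  constructor
  · exact mul_nonneg (pow_nonneg h1 _) (pow_nonneg (by linarith) _)
  · exact mul_le_one₀ (pow_le_one₀ h1 h2) (pow_nonneg (by linarith) _)
      (pow_le_one₀ (by linarith) (by linarith))

lemma cQ_finsum (a : ℕ) (ψ : ℝ × ℝ) : ∑ b : Fin 2, cQ a (b : ℕ) ψ = 1 := by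
  rw [Fin.sum_univ_two]
  simp [cQ]

lemma cP_finsum (θ : ℝ) : ∑ a : Fin 2, cP (a : ℕ) θ = 1 := by
  rw [Fin.sum_univ_two]
  simp [cP]

lemma ae_mem {α : Type*} [MeasurableSpace α] {ν : Measure α} {S : Set α} (hS : ν Sᶜ = 0) :
    ∀ᵐ a ∂ν, a ∈ S := by
  rw [ae_iff]
  simpa [Set.compl_def] using hS

lemma integ_aux {α : Type*} [MeasurableSpace α] {ν : Measure α} [IsFiniteMeasure ν]
    {S : Set α} (hS : ν Sᶜ = 0) {f : α → ℝ} (hf : Measurable f)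
    {C : ℝ} (hC : ∀ a ∈ S, |f a| ≤ C) : Integrable f ν := by
  refine Integrable.mono' (integrable_const C) hf.aestronglyMeasurable ?_
  filter_upwards [ae_mem hS] with a ha
  simpa [Real.norm_eq_abs] using hC a ha

lemma int_nonneg_aux {α : Type*} [MeasurableSpace α] {ν : Measure α} {S : Set α}
    (hS : ν Sᶜ = 0) {f : α → ℝ} (hC : ∀ a ∈ S, 0 ≤ f a) : 0 ≤ ∫ a, f a ∂ν :=
  integral_nonneg_of_ae (by filter_upwards [ae_mem hS] with a ha using hC a ha)

lemma prodQ_mem {m : ℕ} (a b : Fin m → ℕ) {ψ : ℝ × ℝ}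
    (h : ψ ∈ Set.Icc (0:ℝ) 1 ×ˢ Set.Icc (0:ℝ) 1) :
    (∏ k : Fin m, cQ (a k) (b k) ψ) ∈ Set.Icc (0:ℝ) 1 :=
  ⟨Finset.prod_nonneg fun k _ => (cQ_mem h).1,
   Finset.prod_le_one (fun k _ => (cQ_mem h).1) (fun k _ => (cQ_mem h).2)⟩

lemma prodP_mem {m : ℕ} (a : Fin m → ℕ) {θ : ℝ} (h : θ ∈ Set.Icc (0:ℝ) 1) :
    (∏ k : Fin m, cP (a k) θ) ∈ Set.Icc (0:ℝ) 1 :=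
  ⟨Finset.prod_nonneg fun k _ => (cP_mem h).1,
   Finset.prod_le_one (fun k _ => (cP_mem h).1) (fun k _ => (cP_mem h).2)⟩

variable {ν₁ : Measure ℝ} {ν₂ : Measure (ℝ × ℝ)}

lemma integrableQ [IsProbabilityMeasure ν₂]
    (hν₂ : ν₂ (Set.Icc (0:ℝ) 1 ×ˢ Set.Icc (0:ℝ) 1)ᶜ = 0) {m : ℕ} (a b : Fin m → ℕ) :
    Integrable (fun ψ => ∏ k : Fin m, cQ (a k) (b k) ψ) ν₂ :=
  integ_aux hν₂ (Finset.measurable_prod _ fun k _ => measurable_cQ _ _)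
    (C := 1) (fun ψ hψ => abs_le.2 ⟨by linarith [(prodQ_mem a b hψ).1], (prodQ_mem a b hψ).2⟩)

lemma integrableP [IsProbabilityMeasure ν₁]
    (hν₁ : ν₁ (Set.Icc (0:ℝ) 1)ᶜ = 0) {m : ℕ} (a : Fin m → ℕ) :
    Integrable (fun θ => ∏ k : Fin m, cP (a k) θ) ν₁ :=
  integ_aux hν₁ (Finset.measurable_prod _ fun k _ => measurable_cP _)
    (C := 1) (fun θ hθ => abs_le.2 ⟨by linarith [(prodP_mem a hθ).1], (prodP_mem a hθ).2⟩)

lemma intQ_nonneg (hν₂ : ν₂ (Set.Icc (0:ℝ) 1 ×ˢ Set.Icc (0:ℝ) 1)ᶜ = 0) {m : ℕ} (a b : Fin m → ℕ) :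
    0 ≤ ∫ ψ, ∏ k : Fin m, cQ (a k) (b k) ψ ∂ν₂ :=
  int_nonneg_aux hν₂ fun ψ hψ => (prodQ_mem a b hψ).1

lemma intP_nonneg (hν₁ : ν₁ (Set.Icc (0:ℝ) 1)ᶜ = 0) {m : ℕ} (a : Fin m → ℕ) :
    0 ≤ ∫ θ, ∏ k : Fin m, cP (a k) θ ∂ν₁ :=
  int_nonneg_aux hν₁ fun θ hθ => (prodP_mem a hθ).1

lemma prod_ite_castLE {M : Type*} [CommMonoid M] {m n : ℕ} (h : n ≤ m) (G : Fin m → M) :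
    (∏ k : Fin m, if (k : ℕ) < n then G k else 1) = ∏ k : Fin n, G (k.castLE h) := by
  classical
  rw [← Finset.prod_subset
    (Finset.subset_univ ((Finset.univ : Finset (Fin n)).image (Fin.castLE h)))
    (fun k _ hk => by
      rw [if_neg]
      intro hkn
      exact hk (Finset.mem_image.2 ⟨⟨(k : ℕ), hkn⟩, Finset.mem_univ _, rfl⟩))]
  rw [Finset.prod_image (fun a _ b _ hab => Fin.castLE_injective h hab)]
  exact Finset.prod_congr rfl fun k _ => if_pos k.isLt

lemma squeeze {Ω ι : Type*} [MeasurableSpace Ω] [Fintype ι] (μ : Measure Ω)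
    [IsProbabilityMeasure μ] (A : ι → Set Ω) (g : ι → ENNReal)
    (hA : ∀ i, μ (A i) = g i)
    (hcover : ∀ ω, ∃ i, ω ∈ A i)
    (hsum : ∑ i, g i = 1) (T : Finset ι) :
    μ (⋃ i ∈ T, A i) = ∑ i ∈ T, g i := by
  classical
  have hfin : ∀ s : Finset ι, ∑ i ∈ s, g i ≠ ⊤ := by
    intro s
    have h1 : ∑ i ∈ s, g i ≤ ∑ i, g i := Finset.sum_le_sum_of_subset (Finset.subset_univ s)
    rw [hsum] at h1
    exact (lt_of_le_of_lt h1 (by norm_num)).ne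
  have hU : μ (⋃ i ∈ T, A i) ≤ ∑ i ∈ T, g i := by
    calc μ (⋃ i ∈ T, A i) ≤ ∑ i ∈ T, μ (A i) := measure_biUnion_finset_le T A
    _ = ∑ i ∈ T, g i := Finset.sum_congr rfl fun i _ => hA i
  have hUc : μ (⋃ i ∈ T, A i)ᶜ ≤ ∑ i ∈ Tᶜ, g i := by
    have hsub : (⋃ i ∈ T, A i)ᶜ ⊆ ⋃ i ∈ Tᶜ, A i := by
      intro ω hω
      obtain ⟨i, hi⟩ := hcover ω
      have hiT : i ∉ T := fun hiT => hω (Set.mem_biUnion hiT hi)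
      exact Set.mem_biUnion (Finset.mem_compl.2 hiT) hi
    calc μ (⋃ i ∈ T, A i)ᶜ ≤ μ (⋃ i ∈ Tᶜ, A i) := measure_mono hsub
    _ ≤ ∑ i ∈ Tᶜ, μ (A i) := measure_biUnion_finset_le _ _
    _ = ∑ i ∈ Tᶜ, g i := Finset.sum_congr rfl fun i _ => hA i
  have h1 : (1 : ENNReal) ≤ μ (⋃ i ∈ T, A i) + μ (⋃ i ∈ T, A i)ᶜ := by
    rw [← measure_univ (μ := μ)]
    rw [← Set.union_compl_self (⋃ i ∈ T, A i)]
    exact measure_union_le _ _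
  refine le_antisymm hU ?_
  have h2 : ∑ i ∈ T, g i + ∑ i ∈ Tᶜ, g i = 1 := by
    rw [Finset.sum_add_sum_compl]; exact hsum
  have h3 : ∑ i ∈ T, g i + ∑ i ∈ Tᶜ, g i ≤ μ (⋃ i ∈ T, A i) + ∑ i ∈ Tᶜ, g i := by
    rw [h2]; exact le_trans h1 (add_le_add le_rfl hUc)
  exact (ENNReal.add_le_add_iff_right (hfin Tᶜ)).1 h3


lemma master {Ω : Type*} [MeasurableSpace Ω] (μ : Measure Ω) [IsProbabilityMeasure μ]
    (X Y : ℕ → Ω → ℕ) (hbinX : ∀ i ω, X i ω ≤ 1) (hbinY : ∀ i ω, Y i ω ≤ 1)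
    (ν₁ : Measure ℝ) [IsProbabilityMeasure ν₁]
    (ν₂ : Measure (ℝ × ℝ)) [IsProbabilityMeasure ν₂]
    (hν₁ : ν₁ (Set.Icc (0:ℝ) 1)ᶜ = 0)
    (hν₂ : ν₂ (Set.Icc (0:ℝ) 1 ×ˢ Set.Icc (0:ℝ) 1)ᶜ = 0)
    (hrep : ∀ (N : ℕ) (x y : Fin N → ℕ), (∀ n, x n ≤ 1) → (∀ n, y n ≤ 1) →
      μ {ω | ∀ n : Fin N, X n ω = x n ∧ Y n ω = y n} =
        ENNReal.ofReal (∫ θ, ∫ ψ,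
          ∏ n, ((if x n = 0 then ψ.1 else ψ.2) ^ (y n) *
              (1 - if x n = 0 then ψ.1 else ψ.2) ^ (1 - y n) *
              (θ ^ (x n) * (1 - θ) ^ (1 - x n))) ∂ν₂ ∂ν₁))
    (m n : ℕ) (hnm : n ≤ m) (x : Fin m → ℕ) (y : Fin n → ℕ)
    (hx : ∀ k, x k ≤ 1) (hy : ∀ k, y k ≤ 1) :
    μ {ω | (∀ k : Fin n, Y k ω = y k) ∧ (∀ k : Fin m, X k ω = x k)} =
      ENNReal.ofReal ((∫ ψ, ∏ k : Fin n, cQ (x (k.castLE hnm)) (y k) ψ ∂ν₂) *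
        (∫ θ, ∏ k : Fin m, cP (x k) θ ∂ν₁)) := by
  classical
  -- Step A: reformulated representation
  have hrep' : ∀ (a b : Fin m → ℕ), (∀ k, a k ≤ 1) → (∀ k, b k ≤ 1) →
      μ {ω | ∀ k : Fin m, X k ω = a k ∧ Y k ω = b k} =
        ENNReal.ofReal ((∫ ψ, ∏ k : Fin m, cQ (a k) (b k) ψ ∂ν₂) *
          (∫ θ, ∏ k : Fin m, cP (a k) θ ∂ν₁)) := by
    intro a b ha hb
    rw [hrep m a b ha hb]
    congr 1
    have h1 : ∀ θ : ℝ, (∫ ψ,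
        ∏ k : Fin m, ((if a k = 0 then ψ.1 else ψ.2) ^ (b k) *
          (1 - if a k = 0 then ψ.1 else ψ.2) ^ (1 - b k) *
          (θ ^ (a k) * (1 - θ) ^ (1 - a k))) ∂ν₂)
        = (∫ ψ, ∏ k : Fin m, cQ (a k) (b k) ψ ∂ν₂) * ∏ k : Fin m, cP (a k) θ := by
      intro θ
      have h2 : ∀ ψ : ℝ × ℝ,
          (∏ k : Fin m, ((if a k = 0 then ψ.1 else ψ.2) ^ (b k) *
            (1 - if a k = 0 then ψ.1 else ψ.2) ^ (1 - b k) *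
            (θ ^ (a k) * (1 - θ) ^ (1 - a k))))
          = (∏ k : Fin m, cQ (a k) (b k) ψ) * ∏ k : Fin m, cP (a k) θ := by
        intro ψ
        rw [← Finset.prod_mul_distrib]
        rfl
      simp_rw [h2]
      exact integral_mul_const _ _
    simp_rw [h1]
    exact integral_const_mul _ _
  -- atoms
  set A : (Fin m → Fin 2 × Fin 2) → Set Ω := fun v =>
    {ω | ∀ k : Fin m, X k ω = ((v k).1 : ℕ) ∧ Y k ω = ((v k).2 : ℕ)} with hAdef
  set g : (Fin m → Fin 2 × Fin 2) → ℝ := fun v =>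
    (∫ ψ, ∏ k : Fin m, cQ ((v k).1 : ℕ) ((v k).2 : ℕ) ψ ∂ν₂) *
      (∫ θ, ∏ k : Fin m, cP ((v k).1 : ℕ) θ ∂ν₁) with hgdef
  have hA : ∀ v, μ (A v) = ENNReal.ofReal (g v) := fun v =>
    hrep' _ _ (fun k => by have := (v k).1.isLt; omega)
      (fun k => by have := (v k).2.isLt; omega)
  have hgnn : ∀ v, 0 ≤ g v := fun v =>
    mul_nonneg (intQ_nonneg hν₂ _ _) (intP_nonneg hν₁ _)
  have hcover : ∀ ω, ∃ v, ω ∈ A v := by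
    intro ω
    refine ⟨fun k => (⟨X k ω, by have := hbinX k ω; omega⟩,
      ⟨Y k ω, by have := hbinY k ω; omega⟩), fun k => ⟨rfl, rfl⟩⟩
  -- total mass one
  have hgsum : ∑ v : Fin m → Fin 2 × Fin 2, g v = 1 := by
    rw [← Equiv.sum_comp (Equiv.arrowProdEquivProdArrow (Fin m) (fun _ => Fin 2) (fun _ => Fin 2)).symm g,
      Fintype.sum_prod_type]
    have hQone : ∀ w1 : Fin m → Fin 2,
        ∑ w2 : Fin m → Fin 2, (∫ ψ, ∏ k : Fin m, cQ (w1 k : ℕ) (w2 k : ℕ) ψ ∂ν₂) = 1 := by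
      intro w1
      rw [← integral_finset_sum _ (fun w2 _ => integrableQ hν₂ _ _)]
      have h3 : ∀ ψ : ℝ × ℝ,
          ∑ w2 : Fin m → Fin 2, ∏ k : Fin m, cQ (w1 k : ℕ) (w2 k : ℕ) ψ = 1 := by
        intro ψ
        have hps := Finset.prod_univ_sum (fun _ : Fin m => (Finset.univ : Finset (Fin 2)))
          (fun k j => cQ (w1 k : ℕ) (j : ℕ) ψ)
        rw [Fintype.piFinset_univ] at hps
        rw [← hps]
        rw [Finset.prod_congr rfl fun k _ => cQ_finsum (w1 k : ℕ) ψ]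
        simp
      simp_rw [h3]
      simp
    have h4 : ∀ w1 w2 : Fin m → Fin 2,
        g ((Equiv.arrowProdEquivProdArrow (Fin m) (fun _ => Fin 2) (fun _ => Fin 2)).symm (w1, w2)) =
        (∫ ψ, ∏ k : Fin m, cQ (w1 k : ℕ) (w2 k : ℕ) ψ ∂ν₂) *
          (∫ θ, ∏ k : Fin m, cP (w1 k : ℕ) θ ∂ν₁) := by
      intro w1 w2
      rfl
    simp_rw [h4, ← Finset.sum_mul]
    simp_rw [hQone, one_mul]
    rw [← integral_finset_sum _ (fun w1 _ => integrableP hν₁ _)]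
    have h5 : ∀ θ : ℝ, ∑ w1 : Fin m → Fin 2, ∏ k : Fin m, cP (w1 k : ℕ) θ = 1 := by
      intro θ
      have hps := Finset.prod_univ_sum (fun _ : Fin m => (Finset.univ : Finset (Fin 2)))
        (fun _ j => cP (j : ℕ) θ)
      rw [Fintype.piFinset_univ] at hps
      rw [← hps]
      rw [Finset.prod_congr rfl fun k _ => cP_finsum θ]
      simp
    simp_rw [h5]
    simp
  have hofsum : ∑ v : Fin m → Fin 2 × Fin 2, ENNReal.ofReal (g v) = 1 := by
    rw [← ENNReal.ofReal_sum_of_nonneg (fun v _ => hgnn v), hgsum, ENNReal.ofReal_one]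
  -- the event as a union of atoms
  set xf : Fin m → Fin 2 := fun k => ⟨x k, by have := hx k; omega⟩ with hxfdef
  set yb : Fin m → ℕ := fun k => if h : (k : ℕ) < n then y ⟨(k : ℕ), h⟩ else 0 with hybdef
  have hyb : ∀ k, yb k ≤ 1 := by
    intro k
    rw [hybdef]
    dsimp only
    split
    · exact hy _
    · omega
  set t : Fin m → Finset (Fin 2) := fun k =>
    if (k : ℕ) < n then {(⟨yb k, by have := hyb k; omega⟩ : Fin 2)} else Finset.univ with htdef
  set V : (Fin m → Fin 2) → (Fin m → Fin 2 × Fin 2) := fun w k => (xf k, w k) with hVdef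
  set W := Fintype.piFinset t with hWdef
  have hE : {ω | (∀ k : Fin n, Y k ω = y k) ∧ (∀ k : Fin m, X k ω = x k)} =
      ⋃ v ∈ W.image V, A v := by
    ext ω
    constructor
    · rintro ⟨hY, hX⟩
      set w : Fin m → Fin 2 := fun k => ⟨Y k ω, by have := hbinY k ω; omega⟩ with hwdef
      have hwW : w ∈ W := by
        rw [hWdef, Fintype.mem_piFinset]
        intro k
        rw [htdef]
        dsimp only
        split
        · next h =>
          rw [Finset.mem_singleton]
          apply Fin.ext
          show Y k ω = yb k
          rw [hybdef]
          dsimp only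
          rw [dif_pos h]
          exact hY ⟨(k : ℕ), h⟩
        · exact Finset.mem_univ _
      refine Set.mem_biUnion (Finset.mem_image.2 ⟨w, hwW, rfl⟩) ?_
      intro k
      exact ⟨hX k, rfl⟩
    · intro hω
      obtain ⟨v, hvT, hωA⟩ := Set.mem_iUnion₂.1 hω
      obtain ⟨w, hwW, rfl⟩ := Finset.mem_image.1 hvT
      constructor
      · intro k
        have h6 := (hωA (k.castLE hnm)).2
        have h7 : w (k.castLE hnm) ∈ t (k.castLE hnm) := Fintype.mem_piFinset.1 hwW _
        rw [htdef] at h7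
        dsimp only at h7
        rw [if_pos (show ((k.castLE hnm : Fin m) : ℕ) < n from k.isLt)] at h7
        rw [Finset.mem_singleton] at h7
        have h8 : (w (k.castLE hnm) : ℕ) = yb (k.castLE hnm) := by rw [h7]
        have h9 : yb (k.castLE hnm) = y k := by
          rw [hybdef]
          dsimp only
          rw [dif_pos (show ((k.castLE hnm : Fin m) : ℕ) < n from k.isLt)]
          exact congrArg y (Fin.eta _ _)
        rw [show ((k : Fin n) : ℕ) = ((k.castLE hnm : Fin m) : ℕ) from rfl]
        rw [h6, h8, h9]
      · intro k
        exact (hωA k).1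
  rw [hE, squeeze μ A (fun v => ENNReal.ofReal (g v)) hA hcover hofsum]
  rw [Finset.sum_image (fun a _ b _ hab => by
    funext k
    exact congrArg Prod.snd (congrFun hab k))]
  have h10 : ∀ w ∈ W, ENNReal.ofReal (g (V w)) =
      ENNReal.ofReal ((∫ ψ, ∏ k : Fin m, cQ (x k) (w k : ℕ) ψ ∂ν₂) *
        (∫ θ, ∏ k : Fin m, cP (x k) θ ∂ν₁)) := by
    intro w _
    rfl
  rw [Finset.sum_congr rfl h10]
  rw [← ENNReal.ofReal_sum_of_nonneg
    (fun w _ => mul_nonneg (intQ_nonneg hν₂ _ _) (intP_nonneg hν₁ _))]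
  congr 1
  rw [← Finset.sum_mul]
  congr 1
  rw [← integral_finset_sum _ (fun w _ => integrableQ hν₂ _ _)]
  congr 1
  funext ψ
  rw [← Finset.prod_univ_sum t (fun k j => cQ (x k) (j : ℕ) ψ)]
  have h11 : ∀ k : Fin m, (∑ j ∈ t k, cQ (x k) (j : ℕ) ψ) =
      if (k : ℕ) < n then cQ (x k) (yb k) ψ else 1 := by
    intro k
    rw [htdef]
    dsimp only
    split
    · rw [Finset.sum_singleton]
    · exact cQ_finsum (x k) ψ
  rw [Finset.prod_congr rfl fun k _ => h11 k]
  rw [prod_ite_castLE hnm (fun k => cQ (x k) (yb k) ψ)]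
  refine Finset.prod_congr rfl fun k _ => ?_
  congr 1
  rw [hybdef]
  dsimp only
  rw [dif_pos (show ((k.castLE hnm : Fin m) : ℕ) < n from k.isLt)]
  exact congrArg y (Fin.eta _ _)

end Stmt16Aux

/-- Converse bivariate Causal de Finetti: if the joint law of the binary pairs
(Xₙ, Yₙ) is a mixture over independent parameters θ (for P(X)) and ψ = (ψ₀, ψ₁)
(for P(Y|X)), then (a) the sequence of pairs is exchangeable and
(b) Y_{[n]} ⟂ X_{n+1} | X_{[n]} for every n. -/
theorem stmt16 {Ω : Type*} [MeasurableSpace Ω] (μ : Measure Ω) [IsProbabilityMeasure μ]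
    (X Y : ℕ → Ω → ℕ) (hbinX : ∀ i ω, X i ω ≤ 1) (hbinY : ∀ i ω, Y i ω ≤ 1)
    (ν₁ : Measure ℝ) [IsProbabilityMeasure ν₁]
    (ν₂ : Measure (ℝ × ℝ)) [IsProbabilityMeasure ν₂]
    (hν₁ : ν₁ (Set.Icc (0:ℝ) 1)ᶜ = 0)
    (hν₂ : ν₂ (Set.Icc (0:ℝ) 1 ×ˢ Set.Icc (0:ℝ) 1)ᶜ = 0)
    (hrep : ∀ (N : ℕ) (x y : Fin N → ℕ), (∀ n, x n ≤ 1) → (∀ n, y n ≤ 1) →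
      μ {ω | ∀ n : Fin N, X n ω = x n ∧ Y n ω = y n} =
        ENNReal.ofReal (∫ θ, ∫ ψ,
          ∏ n, ((if x n = 0 then ψ.1 else ψ.2) ^ (y n) *
              (1 - if x n = 0 then ψ.1 else ψ.2) ^ (1 - y n) *
              (θ ^ (x n) * (1 - θ) ^ (1 - x n))) ∂ν₂ ∂ν₁)) :
    (∀ (N : ℕ) (π : Equiv.Perm (Fin N)) (x y : Fin N → ℕ),
        μ {ω | ∀ n : Fin N, X (π n) ω = x n ∧ Y (π n) ω = y n} =
          μ {ω | ∀ n : Fin N, X n ω = x n ∧ Y n ω = y n}) ∧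
      (∀ (n : ℕ) (x : Fin (n + 1) → ℕ) (y : Fin n → ℕ),
        μ {ω | (∀ k : Fin n, Y k ω = y k) ∧ ∀ k : Fin (n + 1), X k ω = x k} *
            μ {ω | ∀ k : Fin n, X k ω = x k.castSucc} =
          μ {ω | (∀ k : Fin n, Y k ω = y k) ∧ ∀ k : Fin n, X k ω = x k.castSucc} *
            μ {ω | ∀ k : Fin (n + 1), X k ω = x k}) := by
  constructor
  · -- (a) exchangeability
    intro N π x y
    by_cases hb : (∀ k, x k ≤ 1) ∧ (∀ k, y k ≤ 1)
    · obtain ⟨hx, hy⟩ := hb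
      have hset : {ω | ∀ k : Fin N, X (π k) ω = x k ∧ Y (π k) ω = y k}
          = {ω | ∀ k : Fin N, X k ω = x (π.symm k) ∧ Y k ω = y (π.symm k)} := by
        ext ω
        constructor
        · intro h k
          have := h (π.symm k)
          simpa using this
        · intro h k
          have := h (π k)
          simpa using this
      rw [hset,
        hrep N (fun k => x (π.symm k)) (fun k => y (π.symm k)) (fun k => hx _) (fun k => hy _),
        hrep N x y hx hy]
      congr 1
      congr 1
      funext θ
      congr 1
      funext ψ
      exact Equiv.prod_comp π.symm (fun k =>
        (if x k = 0 then ψ.1 else ψ.2) ^ (y k) *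
          (1 - if x k = 0 then ψ.1 else ψ.2) ^ (1 - y k) *
          (θ ^ (x k) * (1 - θ) ^ (1 - x k)))
    · have h1 : {ω | ∀ k : Fin N, X (π k) ω = x k ∧ Y (π k) ω = y k} = ∅ := by
        rw [Set.eq_empty_iff_forall_notMem]
        intro ω hω
        exact hb ⟨fun k => (hω k).1 ▸ hbinX (π k) ω, fun k => (hω k).2 ▸ hbinY (π k) ω⟩
      have h2 : {ω | ∀ k : Fin N, X k ω = x k ∧ Y k ω = y k} = ∅ := by
        rw [Set.eq_empty_iff_forall_notMem]
        intro ω hω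
        exact hb ⟨fun k => (hω k).1 ▸ hbinX k ω, fun k => (hω k).2 ▸ hbinY k ω⟩
      rw [h1, h2]
  · -- (b) conditional independence
    intro n x y
    by_cases hx : ∀ k, x k ≤ 1
    · by_cases hy : ∀ k, y k ≤ 1
      · have hA := Stmt16Aux.master μ X Y hbinX hbinY ν₁ ν₂ hν₁ hν₂ hrep (n + 1) n
          (Nat.le_succ n) x y hx hy
        have hD := Stmt16Aux.master μ X Y hbinX hbinY ν₁ ν₂ hν₁ hν₂ hrep (n + 1) 0
          (Nat.zero_le _) x (fun k => 0) hx (fun k => le_of_lt one_pos)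
        have hB := Stmt16Aux.master μ X Y hbinX hbinY ν₁ ν₂ hν₁ hν₂ hrep n 0
          (Nat.zero_le _) (fun k => x k.castSucc) (fun k => 0) (fun k => hx _)
          (fun k => le_of_lt one_pos)
        have hC := Stmt16Aux.master μ X Y hbinX hbinY ν₁ ν₂ hν₁ hν₂ hrep n n
          le_rfl (fun k => x k.castSucc) y (fun k => hx _) hy
        beta_reduce at hA hB hC hD
        have hsetD : {ω : Ω | (∀ k : Fin 0, Y k ω = 0) ∧ ∀ k : Fin (n+1), X k ω = x k} =
            {ω : Ω | ∀ k : Fin (n+1), X k ω = x k} := by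
          ext ω; simp
        have hsetB : {ω : Ω | (∀ k : Fin 0, Y k ω = 0) ∧ ∀ k : Fin n, X k ω = x k.castSucc} =
            {ω : Ω | ∀ k : Fin n, X k ω = x k.castSucc} := by
          ext ω; simp
        have hQ0 : ∀ {α : Type} [inst : MeasurableSpace α] (ν : Measure α)
            [IsProbabilityMeasure ν] (f : Fin 0 → α → ℝ),
            (∫ ψ, ∏ k : Fin 0, f k ψ ∂ν) = 1 := by
          intro α inst ν hν f
          simp
        rw [hsetD] at hD
        rw [hsetB] at hB
        -- identify Q factors in hA and hC
        set Q : ℝ := ∫ ψ, ∏ k : Fin n, Stmt16Aux.cQ (x (k.castLE (Nat.le_succ n))) (y k) ψ ∂ν₂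
          with hQdef
        set P1 : ℝ := ∫ θ, ∏ k : Fin (n+1), Stmt16Aux.cP (x k) θ ∂ν₁ with hP1def
        set P0 : ℝ := ∫ θ, ∏ k : Fin n, Stmt16Aux.cP (x k.castSucc) θ ∂ν₁ with hP0def
        have hCQ : (∫ ψ, ∏ k : Fin n,
            Stmt16Aux.cQ ((fun k => x k.castSucc) (k.castLE le_rfl)) (y k) ψ ∂ν₂) = Q := rfl
        rw [hA, hB, hC, hD, hCQ, hQ0, hQ0, one_mul, one_mul]
        have hQnn : 0 ≤ Q := Stmt16Aux.intQ_nonneg hν₂ _ _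
        have hP1nn : 0 ≤ P1 := Stmt16Aux.intP_nonneg hν₁ _
        have hP0nn : 0 ≤ P0 := Stmt16Aux.intP_nonneg hν₁ _
        rw [← ENNReal.ofReal_mul (mul_nonneg hQnn hP1nn),
          ← ENNReal.ofReal_mul (mul_nonneg hQnn hP0nn)]
        congr 1
        ring
      · push_neg at hy
        obtain ⟨k0, hk0⟩ := hy
        have hA : {ω | (∀ k : Fin n, Y k ω = y k) ∧ ∀ k : Fin (n+1), X k ω = x k} = ∅ := by
          rw [Set.eq_empty_iff_forall_notMem]
          rintro ω ⟨h1, h2⟩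
          exact absurd (h1 k0 ▸ hbinY k0 ω) (by omega)
        have hC : {ω | (∀ k : Fin n, Y k ω = y k) ∧ ∀ k : Fin n, X k ω = x k.castSucc} = ∅ := by
          rw [Set.eq_empty_iff_forall_notMem]
          rintro ω ⟨h1, h2⟩
          exact absurd (h1 k0 ▸ hbinY k0 ω) (by omega)
        rw [hA, hC]
        simp
    · push_neg at hx
      obtain ⟨k0, hk0⟩ := hx
      have hA : {ω | (∀ k : Fin n, Y k ω = y k) ∧ ∀ k : Fin (n+1), X k ω = x k} = ∅ := by
        rw [Set.eq_empty_iff_forall_notMem]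
        rintro ω ⟨h1, h2⟩
        exact absurd (h2 k0 ▸ hbinX k0 ω) (by omega)
      have hD : {ω | ∀ k : Fin (n+1), X k ω = x k} = ∅ := by
        rw [Set.eq_empty_iff_forall_notMem]
        intro ω h2
        exact absurd (h2 k0 ▸ hbinX k0 ω) (by omega)
      rw [hA, hD]
      simp
end

section
/- In the generative model where θ_e, ψ_e are independent random variables in [0,1], X^e is Bernoulli(θ_e), B^e is Bernoulli(ψ_e) independent of X^e given (θ_e, ψ_e), and Y^e = B^e XOR X^e, two samples (X_1^e, Y_1^e), (X_2^e, Y_2^e) drawn conditionally i.i.d. given (θ_e, ψ_e) satisfy: X_1^e is conditionally independent of Y_2^e given X_2^e. -/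
open MeasureTheory
open scoped ENNReal


private lemma integrable_of_bdd' (ν : Measure ℝ) [IsProbabilityMeasure ν]
    (h : ν (Set.Icc (0:ℝ) 1)ᶜ = 0) {f : ℝ → ℝ} (hm : Measurable f)
    (hb : ∀ x ∈ Set.Icc (0:ℝ) 1, ‖f x‖ ≤ 1) : Integrable f ν := by
  have hmem : ∀ᵐ x ∂ν, x ∈ Set.Icc (0:ℝ) 1 := by
    exact MeasureTheory.mem_ae_iff.mpr (by rw [show {x | x ∈ Set.Icc (0:ℝ) 1} = Set.Icc (0:ℝ) 1 from rfl]; exact h)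
  exact (integrable_const (1:ℝ)).mono' hm.aestronglyMeasurable
    (hmem.mono fun x hx => by simpa using hb x hx)

private lemma piece' {Ω : Type*} [MeasurableSpace Ω] (ν : Measure Ω) [IsProbabilityMeasure ν]
    {ι : Type*} [Fintype ι] (A : ι → Set Ω) (f : ι → ℝ)
    (hf : ∀ i, 0 ≤ f i) (hAf : ∀ i, ν (A i) ≤ ENNReal.ofReal (f i))
    (hcov : ∀ ω, ∃ i, ω ∈ A i) (hsum : ∑ i, f i = 1)
    (pred : ι → Prop) [DecidablePred pred] (E : Set Ω)
    (hE : E = ⋃ i ∈ Finset.univ.filter pred, A i) :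
    ν E = ENNReal.ofReal (∑ i ∈ Finset.univ.filter pred, f i) := by
  classical
  set S := Finset.univ.filter pred with hS
  set Sc := Finset.univ.filter (fun i => ¬ pred i) with hSc
  have hub : ∀ (T : Finset ι), ν (⋃ i ∈ T, A i) ≤ ENNReal.ofReal (∑ i ∈ T, f i) := by
    intro T
    calc ν (⋃ i ∈ T, A i) ≤ ∑ i ∈ T, ν (A i) := measure_biUnion_finset_le T A
    _ ≤ ∑ i ∈ T, ENNReal.ofReal (f i) := Finset.sum_le_sum fun i _ => hAf i
    _ = ENNReal.ofReal (∑ i ∈ T, f i) := (ENNReal.ofReal_sum_of_nonneg fun i _ => hf i).symm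
  have hunion : (⋃ i ∈ S, A i) ∪ (⋃ i ∈ Sc, A i) = Set.univ := by
    ext ω
    simp only [Set.mem_union, Set.mem_iUnion, Set.mem_univ, iff_true, hS, hSc,
      Finset.mem_filter, Finset.mem_univ, true_and]
    obtain ⟨i, hi⟩ := hcov ω
    by_cases h : pred i
    · exact Or.inl ⟨i, h, hi⟩
    · exact Or.inr ⟨i, h, hi⟩
  have hsum2 : ∑ i ∈ S, f i + ∑ i ∈ Sc, f i = 1 := by
    rw [hS, hSc, Finset.sum_filter_add_sum_filter_not]; exact hsum
  rw [hE]
  refine le_antisymm (hub S) ?_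
  have h1 : (1:ℝ≥0∞) ≤ ν (⋃ i ∈ S, A i) + ν (⋃ i ∈ Sc, A i) := by
    calc (1:ℝ≥0∞) = ν Set.univ := (measure_univ (μ := ν)).symm
    _ = ν ((⋃ i ∈ S, A i) ∪ (⋃ i ∈ Sc, A i)) := by rw [hunion]
    _ ≤ _ := measure_union_le _ _
  have hSnn : 0 ≤ ∑ i ∈ S, f i := Finset.sum_nonneg fun i _ => hf i
  have hScnn : 0 ≤ ∑ i ∈ Sc, f i := Finset.sum_nonneg fun i _ => hf i
  have key : ENNReal.ofReal (∑ i ∈ S, f i) + ENNReal.ofReal (∑ i ∈ Sc, f i)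
      ≤ ν (⋃ i ∈ S, A i) + ENNReal.ofReal (∑ i ∈ Sc, f i) := by
    calc ENNReal.ofReal (∑ i ∈ S, f i) + ENNReal.ofReal (∑ i ∈ Sc, f i)
        = ENNReal.ofReal (∑ i ∈ S, f i + ∑ i ∈ Sc, f i) := (ENNReal.ofReal_add hSnn hScnn).symm
    _ = 1 := by rw [hsum2]; simp
    _ ≤ ν (⋃ i ∈ S, A i) + ν (⋃ i ∈ Sc, A i) := h1
    _ ≤ _ := add_le_add_right (hub Sc) _
  exact (ENNReal.add_le_add_iff_right ENNReal.ofReal_ne_top).mp key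

/-- In the XOR generative model (X = Ber(θₑ), Y = Ber(ψₑ) ⊕ X, two conditionally
i.i.d. samples per environment, θₑ ⟂ ψₑ), the first sample's cause X₁ is
conditionally independent of the second sample's effect Y₂ given X₂. -/
theorem stmt17 {Ω : Type*} [MeasurableSpace Ω] (μ : Measure Ω) [IsProbabilityMeasure μ]
    (X Y : Fin 2 → Ω → ℕ) (hbinX : ∀ n ω, X n ω ≤ 1) (hbinY : ∀ n ω, Y n ω ≤ 1)
    (μθ μψ : Measure ℝ) [IsProbabilityMeasure μθ] [IsProbabilityMeasure μψ]
    (hθ : μθ (Set.Icc (0:ℝ) 1)ᶜ = 0) (hψ : μψ (Set.Icc (0:ℝ) 1)ᶜ = 0)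
    (hrep : ∀ x y : Fin 2 → ℕ, (∀ n, x n ≤ 1) → (∀ n, y n ≤ 1) →
      μ {ω | ∀ n, X n ω = x n ∧ Y n ω = y n} =
        ENNReal.ofReal (∫ t, ∫ s,
          ∏ n, (t ^ (x n) * (1 - t) ^ (1 - x n) *
            (s ^ ((x n + y n) % 2) * (1 - s) ^ (1 - (x n + y n) % 2))) ∂μψ ∂μθ)) :
    ∀ x₁ x₂ y₂ : ℕ, x₁ ≤ 1 → x₂ ≤ 1 → y₂ ≤ 1 →
      μ {ω | X 0 ω = x₁ ∧ X 1 ω = x₂ ∧ Y 1 ω = y₂} * μ {ω | X 1 ω = x₂} =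
        μ {ω | X 0 ω = x₁ ∧ X 1 ω = x₂} * μ {ω | X 1 ω = x₂ ∧ Y 1 ω = y₂} := by
  intro x₁ x₂ y₂ hx₁ hx₂ hy₂
  classical
  -- abstract marginal integrals
  obtain ⟨P, hPdef⟩ : ∃ P : ℕ → ℕ → ℝ,
      P = fun a c => ∫ t, (t^a*(1-t)^(1-a)) * (t^c*(1-t)^(1-c)) ∂μθ := ⟨_, rfl⟩
  obtain ⟨Q, hQdef⟩ : ∃ Q : ℕ → ℕ → ℝ,
      Q = fun b d => ∫ s, (s^b*(1-s)^(1-b)) * (s^d*(1-s)^(1-d)) ∂μψ := ⟨_, rfl⟩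
  -- measurability & boundedness
  have hmono : ∀ (a c : ℕ), Measurable (fun t : ℝ => (t^a*(1-t)^(1-a)) * (t^c*(1-t)^(1-c))) := by
    intro a c; fun_prop
  have hbd : ∀ (a c : ℕ) (x : ℝ), x ∈ Set.Icc (0:ℝ) 1 →
      ‖(x^a*(1-x)^(1-a)) * (x^c*(1-x)^(1-c))‖ ≤ 1 := by
    intro a c x hx
    obtain ⟨h0, h1⟩ := hx
    have h1' : (0:ℝ) ≤ 1 - x := by linarith
    have key : ∀ m : ℕ, x ^ m * (1-x)^(1-m) ∈ Set.Icc (0:ℝ) 1 := by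
      intro m
      constructor
      · positivity
      · calc x ^ m * (1-x)^(1-m) ≤ 1 * 1 := by
              apply mul_le_mul (pow_le_one₀ h0 h1) (pow_le_one₀ h1' (by linarith)) (by positivity) one_pos.le
        _ = 1 := one_mul 1
    rw [Real.norm_eq_abs, abs_of_nonneg (mul_nonneg (key a).1 (key c).1)]
    calc (x^a*(1-x)^(1-a)) * (x^c*(1-x)^(1-c)) ≤ 1 * 1 :=
          mul_le_mul (key a).2 (key c).2 (key c).1 one_pos.le
    _ = 1 := one_mul 1
  have hTint : ∀ a c : ℕ, Integrable (fun t : ℝ => (t^a*(1-t)^(1-a)) * (t^c*(1-t)^(1-c))) μθ :=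
    fun a c => integrable_of_bdd' μθ hθ (hmono a c) (hbd a c)
  have hSint : ∀ b d : ℕ, Integrable (fun s : ℝ => (s^b*(1-s)^(1-b)) * (s^d*(1-s)^(1-d))) μψ :=
    fun b d => integrable_of_bdd' μψ hψ (hmono b d)  (hbd b d)
  -- ae membership
  have haeθ : ∀ᵐ t ∂μθ, t ∈ Set.Icc (0:ℝ) 1 :=
    MeasureTheory.mem_ae_iff.mpr (by rw [show {t | t ∈ Set.Icc (0:ℝ) 1} = Set.Icc (0:ℝ) 1 from rfl]; exact hθ)
  have haeψ : ∀ᵐ s ∂μψ, s ∈ Set.Icc (0:ℝ) 1 :=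
    MeasureTheory.mem_ae_iff.mpr (by rw [show {s | s ∈ Set.Icc (0:ℝ) 1} = Set.Icc (0:ℝ) 1 from rfl]; exact hψ)
  -- nonnegativity
  have hPnn : ∀ a c, 0 ≤ P a c := by
    intro a c
    rw [hPdef]
    apply integral_nonneg_of_ae
    filter_upwards [haeθ] with t ht
    have h0 := ht.1
    have h1 : (0:ℝ) ≤ 1 - t := by linarith [ht.2]
    positivity
  have hQnn : ∀ b d, 0 ≤ Q b d := by
    intro b d
    rw [hQdef]
    apply integral_nonneg_of_ae
    filter_upwards [haeψ] with s hs
    have h0 := hs.1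
    have h1 : (0:ℝ) ≤ 1 - s := by linarith [hs.2]
    positivity
  -- total mass identities
  have hP4 : P 0 0 + P 0 1 + P 1 0 + P 1 1 = 1 := by
    have hs := (integral_finset_sum (μ := μθ) Finset.univ
      (f := fun (i : Fin 2 × Fin 2) (t : ℝ) =>
        (t^(i.1:ℕ)*(1-t)^(1-(i.1:ℕ))) * (t^(i.2:ℕ)*(1-t)^(1-(i.2:ℕ))))
      (fun i _ => hTint _ _)).symm
    have hone : (fun t : ℝ => ∑ i : Fin 2 × Fin 2,
        (t^(i.1:ℕ)*(1-t)^(1-(i.1:ℕ))) * (t^(i.2:ℕ)*(1-t)^(1-(i.2:ℕ)))) = fun _ => (1:ℝ) := by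
      funext t
      simp [Fintype.sum_prod_type, Fin.sum_univ_two]
      ring
    have h1 : (∫ t, ∑ i : Fin 2 × Fin 2,
        (t^(i.1:ℕ)*(1-t)^(1-(i.1:ℕ))) * (t^(i.2:ℕ)*(1-t)^(1-(i.2:ℕ))) ∂μθ) = 1 := by
      rw [hone, integral_const]; simp
    have h2 := hs.trans h1
    simp only [Fintype.sum_prod_type, Fin.sum_univ_two, Fin.val_zero, Fin.val_one] at h2
    simp only [hPdef]
    linarith [h2]
  have hQ4 : Q 0 0 + Q 0 1 + Q 1 0 + Q 1 1 = 1 := by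
    have hs := (integral_finset_sum (μ := μψ) Finset.univ
      (f := fun (i : Fin 2 × Fin 2) (t : ℝ) =>
        (t^(i.1:ℕ)*(1-t)^(1-(i.1:ℕ))) * (t^(i.2:ℕ)*(1-t)^(1-(i.2:ℕ))))
      (fun i _ => hSint _ _)).symm
    have hone : (fun t : ℝ => ∑ i : Fin 2 × Fin 2,
        (t^(i.1:ℕ)*(1-t)^(1-(i.1:ℕ))) * (t^(i.2:ℕ)*(1-t)^(1-(i.2:ℕ)))) = fun _ => (1:ℝ) := by
      funext t
      simp [Fintype.sum_prod_type, Fin.sum_univ_two]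
      ring
    have h1 : (∫ t, ∑ i : Fin 2 × Fin 2,
        (t^(i.1:ℕ)*(1-t)^(1-(i.1:ℕ))) * (t^(i.2:ℕ)*(1-t)^(1-(i.2:ℕ))) ∂μψ) = 1 := by
      rw [hone, integral_const]; simp
    have h2 := hs.trans h1
    simp only [Fintype.sum_prod_type, Fin.sum_univ_two, Fin.val_zero, Fin.val_one] at h2
    simp only [hQdef]
    linarith [h2]
  -- atom measures
  have hatom : ∀ a b c d : ℕ, a ≤ 1 → b ≤ 1 → c ≤ 1 → d ≤ 1 →
      μ {ω | X 0 ω = a ∧ Y 0 ω = b ∧ X 1 ω = c ∧ Y 1 ω = d}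
        = ENNReal.ofReal (P a c * Q ((a+b)%2) ((c+d)%2)) := by
    intro a b c d ha hb hc hd
    have h := hrep ![a,c] ![b,d] (by intro n; fin_cases n <;> simpa) (by intro n; fin_cases n <;> simpa)
    have hset : {ω | ∀ n, X n ω = ![a,c] n ∧ Y n ω = ![b,d] n}
        = {ω | X 0 ω = a ∧ Y 0 ω = b ∧ X 1 ω = c ∧ Y 1 ω = d} := by
      ext ω
      rw [Set.mem_setOf_eq, Fin.forall_fin_two]
      simp only [Set.mem_setOf_eq, Matrix.cons_val_zero, Matrix.cons_val_one, Matrix.head_cons]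
      tauto
    rw [hset] at h
    rw [h]
    congr 1
    simp only [Fin.prod_univ_two, Matrix.cons_val_zero, Matrix.cons_val_one, Matrix.head_cons]
    have hinner : ∀ t : ℝ,
        (∫ s, (t^a*(1-t)^(1-a) * (s^((a+b)%2)*(1-s)^(1-(a+b)%2)))
            * (t^c*(1-t)^(1-c) * (s^((c+d)%2)*(1-s)^(1-(c+d)%2))) ∂μψ)
        = ((t^a*(1-t)^(1-a)) * (t^c*(1-t)^(1-c))) * Q ((a+b)%2) ((c+d)%2) := by
      intro t
      rw [hQdef]
      simp only
      rw [← integral_const_mul]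
      congr 1
      funext s
      ring
    rw [show (∫ t, ∫ s, (t^a*(1-t)^(1-a) * (s^((a+b)%2)*(1-s)^(1-(a+b)%2)))
            * (t^c*(1-t)^(1-c) * (s^((c+d)%2)*(1-s)^(1-(c+d)%2))) ∂μψ ∂μθ)
        = ∫ t, ((t^a*(1-t)^(1-a)) * (t^c*(1-t)^(1-c))) * Q ((a+b)%2) ((c+d)%2) ∂μθ from by
      congr 1; funext t; exact hinner t]
    rw [integral_mul_const, hPdef]
  -- the indexed family of atoms
  set A : Fin 2 × Fin 2 × Fin 2 × Fin 2 → Set Ω := fun i =>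
      {ω | X 0 ω = (i.1:ℕ) ∧ Y 0 ω = (i.2.1:ℕ) ∧ X 1 ω = (i.2.2.1:ℕ) ∧ Y 1 ω = (i.2.2.2:ℕ)} with hAdef
  set f : Fin 2 × Fin 2 × Fin 2 × Fin 2 → ℝ := fun i =>
      P (i.1:ℕ) (i.2.2.1:ℕ) * Q (((i.1:ℕ)+(i.2.1:ℕ))%2) (((i.2.2.1:ℕ)+(i.2.2.2:ℕ))%2) with hfdef
  have hfnn : ∀ i, 0 ≤ f i := fun i => mul_nonneg (hPnn _ _) (hQnn _ _)
  have hAf : ∀ i, μ (A i) ≤ ENNReal.ofReal (f i) :=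
    fun i => le_of_eq (hatom _ _ _ _ (Fin.is_le _) (Fin.is_le _) (Fin.is_le _) (Fin.is_le _))
  have hcov : ∀ ω, ∃ i, ω ∈ A i := by
    intro ω
    refine ⟨(⟨X 0 ω, Nat.lt_succ_of_le (hbinX 0 ω)⟩, ⟨Y 0 ω, Nat.lt_succ_of_le (hbinY 0 ω)⟩,
      ⟨X 1 ω, Nat.lt_succ_of_le (hbinX 1 ω)⟩, ⟨Y 1 ω, Nat.lt_succ_of_le (hbinY 1 ω)⟩), ?_⟩
    simp [hAdef]
  have hsum : ∑ i, f i = 1 := by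
    simp only [hfdef, Fintype.sum_prod_type, Fin.sum_univ_two, Fin.val_zero, Fin.val_one]
    norm_num
    linear_combination (P 0 0 + P 0 1 + P 1 0 + P 1 1) * hQ4 + hP4
  -- the four events
  have hE1 : μ {ω | X 0 ω = x₁ ∧ X 1 ω = x₂ ∧ Y 1 ω = y₂}
      = ENNReal.ofReal (∑ i ∈ Finset.univ.filter
          (fun i : Fin 2 × Fin 2 × Fin 2 × Fin 2 => (i.1:ℕ) = x₁ ∧ (i.2.2.1:ℕ) = x₂ ∧ (i.2.2.2:ℕ) = y₂), f i) := by
    apply piece' μ A f hfnn hAf hcov hsum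
    ext ω
    simp only [Set.mem_setOf_eq, Set.mem_iUnion, Finset.mem_filter, Finset.mem_univ, true_and,
      hAdef, exists_prop]
    constructor
    · rintro ⟨h1, h2, h3⟩
      exact ⟨(⟨x₁, Nat.lt_succ_of_le hx₁⟩, ⟨Y 0 ω, Nat.lt_succ_of_le (hbinY 0 ω)⟩,
        ⟨x₂, Nat.lt_succ_of_le hx₂⟩, ⟨y₂, Nat.lt_succ_of_le hy₂⟩), ⟨rfl, rfl, rfl⟩, h1, rfl, h2, h3⟩
    · rintro ⟨i, ⟨hp1, hp2, hp3⟩, h1, h2, h3, h4⟩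
      exact ⟨by rw [h1, hp1], by rw [h3, hp2], by rw [h4, hp3]⟩
  have hE2 : μ {ω | X 1 ω = x₂}
      = ENNReal.ofReal (∑ i ∈ Finset.univ.filter (fun i : Fin 2 × Fin 2 × Fin 2 × Fin 2 => (i.2.2.1:ℕ) = x₂), f i) := by
    apply piece' μ A f hfnn hAf hcov hsum
    ext ω
    simp only [Set.mem_setOf_eq, Set.mem_iUnion, Finset.mem_filter, Finset.mem_univ, true_and,
      hAdef, exists_prop]
    constructor
    · intro h
      exact ⟨(⟨X 0 ω, Nat.lt_succ_of_le (hbinX 0 ω)⟩, ⟨Y 0 ω, Nat.lt_succ_of_le (hbinY 0 ω)⟩,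
        ⟨x₂, Nat.lt_succ_of_le hx₂⟩, ⟨Y 1 ω, Nat.lt_succ_of_le (hbinY 1 ω)⟩), rfl, rfl, rfl, h, rfl⟩
    · rintro ⟨i, hp, h1, h2, h3, h4⟩
      rw [h3, hp]
  have hE3 : μ {ω | X 0 ω = x₁ ∧ X 1 ω = x₂}
      = ENNReal.ofReal (∑ i ∈ Finset.univ.filter
          (fun i : Fin 2 × Fin 2 × Fin 2 × Fin 2 => (i.1:ℕ) = x₁ ∧ (i.2.2.1:ℕ) = x₂), f i) := by
    apply piece' μ A f hfnn hAf hcov hsum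
    ext ω
    simp only [Set.mem_setOf_eq, Set.mem_iUnion, Finset.mem_filter, Finset.mem_univ, true_and,
      hAdef, exists_prop]
    constructor
    · rintro ⟨h1, h2⟩
      exact ⟨(⟨x₁, Nat.lt_succ_of_le hx₁⟩, ⟨Y 0 ω, Nat.lt_succ_of_le (hbinY 0 ω)⟩,
        ⟨x₂, Nat.lt_succ_of_le hx₂⟩, ⟨Y 1 ω, Nat.lt_succ_of_le (hbinY 1 ω)⟩), ⟨rfl, rfl⟩, h1, rfl, h2, rfl⟩
    · rintro ⟨i, ⟨hp1, hp2⟩, h1, h2, h3, h4⟩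
      exact ⟨by rw [h1, hp1], by rw [h3, hp2]⟩
  have hE4 : μ {ω | X 1 ω = x₂ ∧ Y 1 ω = y₂}
      = ENNReal.ofReal (∑ i ∈ Finset.univ.filter
          (fun i : Fin 2 × Fin 2 × Fin 2 × Fin 2 => (i.2.2.1:ℕ) = x₂ ∧ (i.2.2.2:ℕ) = y₂), f i) := by
    apply piece' μ A f hfnn hAf hcov hsum
    ext ω
    simp only [Set.mem_setOf_eq, Set.mem_iUnion, Finset.mem_filter, Finset.mem_univ, true_and,
      hAdef, exists_prop]
    constructor
    · rintro ⟨h1, h2⟩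
      exact ⟨(⟨X 0 ω, Nat.lt_succ_of_le (hbinX 0 ω)⟩, ⟨Y 0 ω, Nat.lt_succ_of_le (hbinY 0 ω)⟩,
        ⟨x₂, Nat.lt_succ_of_le hx₂⟩, ⟨y₂, Nat.lt_succ_of_le hy₂⟩), ⟨rfl, rfl⟩, rfl, rfl, h1, h2⟩
    · rintro ⟨i, ⟨hp1, hp2⟩, h1, h2, h3, h4⟩
      exact ⟨by rw [h3, hp1], by rw [h4, hp2]⟩
  rw [hE1, hE2, hE3, hE4,
    ← ENNReal.ofReal_mul (Finset.sum_nonneg fun i _ => hfnn i),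
    ← ENNReal.ofReal_mul (Finset.sum_nonneg fun i _ => hfnn i)]
  congr 1
  interval_cases x₁ <;> interval_cases x₂ <;> interval_cases y₂ <;>
    · simp only [hfdef, Finset.sum_filter, Fintype.sum_prod_type, Fin.sum_univ_two,
        Fin.val_zero, Fin.val_one]
      norm_num
      ring
end
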